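/- arXiv:1512.09112 — 7 statements merged into one kernel-verified Lean document; each statement's English description precedes it below -/
import Mathlib

section
/- Let G be a finite group, π: G → Γ a surjective group homomorphism, p a prime, and T a subgroup of Γ that is cyclic-by-p (i.e., T has a normal Sylow p-subgroup with cyclic quotient of order prime to p). Then there exists a cyclic-by-p subgroup T' of G with π(T') = T. -/
open Subgroup Pointwise

/-- A finite group `H` is cyclic-by-`p` if it has a normal Sylow `p`-subgroup
(i.e. a normal `p`-subgroup of index prime to `p`) with cyclic quotient
(of order prime to `p`). -/
def IsCyclicByP (p : ℕ) (H : Type*) [Group H] : Prop :=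
  ∃ P : Subgroup H, P.Normal ∧ IsPGroup p P ∧ P.index.Coprime p ∧
    ∃ g : H, ∀ h : H, ∃ n : ℤ, g ^ n * h⁻¹ ∈ P


-- aux: decomposition of sup with zpowers of a normalizing element
lemma aux_sup_zpowers {G : Type*} [Group G] (S : Subgroup G) (c : G)
    (hc : c ∈ normalizer (S : Set G)) :
    ∀ h ∈ S ⊔ Subgroup.zpowers c, ∃ n : ℤ, c ^ n * h⁻¹ ∈ S := by
  have hconj : ∀ (a : ℤ) (t : G), t ∈ S → c ^ a * t * (c ^ a)⁻¹ ∈ S := by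
    intro a t ht
    have hca : c ^ a ∈ normalizer (S : Set G) := Subgroup.zpow_mem _ hc a
    exact (Subgroup.mem_normalizer_iff.mp hca t).mp ht
  let K : Subgroup G :=
  { carrier := {h | ∃ n : ℤ, c ^ n * h⁻¹ ∈ S}
    one_mem' := ⟨0, by simpa using S.one_mem⟩
    mul_mem' := by
      rintro x y ⟨a, ha⟩ ⟨b, hb⟩
      refine ⟨a + b, ?_⟩
      have : c ^ (a + b) * (x * y)⁻¹ = (c ^ a * (c ^ b * y⁻¹) * (c ^ a)⁻¹) * (c ^ a * x⁻¹) := by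
        rw [zpow_add]; group
      rw [this]
      exact S.mul_mem (hconj a _ hb) ha
    inv_mem' := by
      rintro x ⟨a, ha⟩
      refine ⟨-a, ?_⟩
      have : c ^ (-a) * x⁻¹⁻¹ = (c ^ (-a)) * (c ^ a * x⁻¹)⁻¹ * (c ^ (-a))⁻¹ := by
        group
      rw [this]
      exact hconj (-a) _ (S.inv_mem ha) }
  intro h hh
  have hK : S ⊔ Subgroup.zpowers c ≤ K := by
    refine sup_le (fun s hs => ⟨0, by simpa using S.inv_mem hs⟩) ?_
    rintro x ⟨n, rfl⟩
    exact ⟨n, by simpa using S.one_mem⟩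
  exact hK hh


lemma isCyclicByP_of_mulEquiv {p : ℕ} {H K : Type*} [Group H] [Group K]
    (e : H ≃* K) (h : IsCyclicByP p H) : IsCyclicByP p K := by
  obtain ⟨P, hnorm, hP, hidx, g, hg⟩ := h
  refine ⟨P.map (e : H →* K), ?_, hP.map (e : H →* K), ?_, e g, ?_⟩
  · rw [Subgroup.map_equiv_eq_comap_symm]
    exact hnorm.comap (e.symm : K →* H)
  · rw [Subgroup.map_equiv_eq_comap_symm, Subgroup.index_comap_of_surjective _ e.symm.surjective]
    exact hidx
  · intro k
    obtain ⟨n, hn⟩ := hg (e.symm k)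
    refine ⟨n, ⟨g ^ n * (e.symm k)⁻¹, hn, ?_⟩⟩
    simp

lemma lemB {G Q : Type*} [Group G] [Group Q] [Finite G] (p : ℕ) [hp : Fact p.Prime]
    (φ : G →* Q) (hφ : Function.Surjective φ) (hQ : IsCyclicByP p Q) :
    ∃ T' : Subgroup G, IsCyclicByP p T' ∧ T'.map φ = ⊤ := by
  classical
  have _ : Finite Q := Finite.of_surjective φ hφ
  obtain ⟨P, hPnorm, hPp, hPidx, g, hg⟩ := hQ
  -- N = preimage of P
  set N : Subgroup G := P.comap φ with hN
  have hNnorm : N.Normal := hPnorm.comap φ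
  have hkerN : φ.ker ≤ N := fun x hx => by
    simp only [hN, Subgroup.mem_comap]
    rw [MonoidHom.mem_ker.mp hx]; exact P.one_mem
  have hmapN : N.map φ = P := Subgroup.map_comap_eq_self_of_surjective hφ P
  -- Sylow subgroup of N
  have _ : Finite (Sylow p N) := inferInstance
  obtain ⟨S⟩ := (Sylow.nonempty : Nonempty (Sylow p N))
  set S₀ : Subgroup G := (S : Subgroup N).map N.subtype with hS₀
  have hS₀N : S₀ ≤ N := Subgroup.map_subtype_le _
  have hS₀p : IsPGroup p S₀ := S.2.map N.subtype
  -- relindex S₀ N is not divisible by p (Sylow)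
  have hrel : S₀.relIndex N = (S : Subgroup N).index := by
    have : S₀.subgroupOf N = (S : Subgroup N) :=
      Subgroup.comap_map_eq_self_of_injective N.subtype_injective _
    rw [Subgroup.relIndex, this]
  have hndS : ¬ p ∣ S₀.relIndex N := by
    rw [hrel]; exact S.not_dvd_index
  -- S₀ ⊔ ker φ = N
  obtain ⟨k, hk⟩ := hPp.exists_card_eq
  have hrelker : φ.ker.relIndex N = Nat.card P := by
    have h1 : φ.ker.subgroupOf N = (φ.comp N.subtype).ker := MonoidHom.comap_ker φ N.subtype
    have h2 : (φ.comp N.subtype).range = P := by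
      rw [MonoidHom.range_comp, Subgroup.range_subtype, hmapN]
    calc φ.ker.relIndex N = (φ.ker.subgroupOf N).index := rfl
      _ = Nat.card (↥N ⧸ φ.ker.subgroupOf N) := Subgroup.index_eq_card _
      _ = Nat.card (↥N ⧸ (φ.comp N.subtype).ker) := by rw [h1]
      _ = Nat.card (φ.comp N.subtype).range :=
          Nat.card_congr (QuotientGroup.quotientKerEquivRange _).toEquiv
      _ = Nat.card P := by rw [h2]
  have hSkN : S₀ ⊔ φ.ker = N := by
    refine le_antisymm (sup_le hS₀N hkerN) (Subgroup.relIndex_eq_one.mp ?_)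
    have hchain2 : S₀ ⊔ φ.ker ≤ N := sup_le hS₀N hkerN
    have hd1 : (S₀ ⊔ φ.ker).relIndex N ∣ S₀.relIndex N :=
      Dvd.intro_left _ (Subgroup.relIndex_mul_relIndex _ _ _ le_sup_left hchain2)
    have hd2 : (S₀ ⊔ φ.ker).relIndex N ∣ p ^ k := by
      rw [← hk, ← hrelker]
      exact Dvd.intro_left _ (Subgroup.relIndex_mul_relIndex _ _ _ le_sup_right hchain2)
    obtain ⟨i, hik, hi⟩ := (Nat.dvd_prime_pow hp.out).mp hd2
    rcases Nat.eq_zero_or_pos i with hi0 | hipos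
    · rw [hi, hi0, pow_zero]
    · exact absurd (hi ▸ hd1 : p ^ i ∣ S₀.relIndex N)
        (fun h => hndS ((dvd_pow_self p hipos.ne').trans h))
  -- image of S₀ is P
  have hmapS₀ : S₀.map φ = P := by
    refine le_antisymm (by rw [← hmapN]; exact Subgroup.map_mono hS₀N) ?_
    intro q hq
    rw [← hmapN] at hq
    obtain ⟨x, hxN, rfl⟩ := hq
    have hx2 : (x : G) ∈ (S₀ : Set G) * (φ.ker : Set G) := by
      rw [← Subgroup.mul_normal]; exact hSkN ▸ hxN
    obtain ⟨s, hs, t, ht, rfl⟩ := hx2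
    exact ⟨s, hs, by rw [map_mul, MonoidHom.mem_ker.mp ht, mul_one]⟩
  -- Frattini: pick m in the normalizer of S₀ with φ m ≡ g mod P
  have hfrat : (normalizer (S₀ : Set G)) ⊔ N = ⊤ := Sylow.normalizer_sup_eq_top S
  obtain ⟨y, hy⟩ := hφ g
  have hy' : (y : G) ∈ ((normalizer (S₀ : Set G)) : Set G) * (N : Set G) := by
    rw [← Subgroup.mul_normal, hfrat]; trivial
  obtain ⟨m, hm, s', hs', hms⟩ := hy'
  -- the subgroup T'
  set T' : Subgroup G := S₀ ⊔ Subgroup.zpowers m with hT'def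
  have hS₀T' : S₀ ≤ T' := le_sup_left
  have hT'M : T' ≤ (normalizer (S₀ : Set G)) :=
    sup_le Subgroup.le_normalizer ((Subgroup.zpowers_le).mpr hm)
  have hmT' : m ∈ T' := Subgroup.mem_sup_right (Subgroup.mem_zpowers m)
  -- image of T' is ⊤
  have hgmem : g ∈ T'.map φ := by
    have hgeq : g = φ m * φ s' := by rw [← map_mul, show m * s' = y from hms, hy]
    rw [hgeq]
    exact Subgroup.mul_mem _ ⟨m, hmT', rfl⟩
      (Subgroup.map_mono hS₀T' (hmapS₀ ▸ hs' : φ s' ∈ S₀.map φ))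
  have hmapT' : T'.map φ = ⊤ := by
    rw [eq_top_iff]
    rintro q -
    obtain ⟨n, hn⟩ := hg q
    have h1 : g ^ n ∈ T'.map φ := Subgroup.zpow_mem _ hgmem n
    have h2 : g ^ n * q⁻¹ ∈ T'.map φ :=
      Subgroup.map_mono hS₀T' (hmapS₀ ▸ hn : g ^ n * q⁻¹ ∈ S₀.map φ)
    have hq : q = (g ^ n * q⁻¹)⁻¹ * g ^ n := by group
    rw [hq]
    exact Subgroup.mul_mem _ (Subgroup.inv_mem _ h2) h1
  -- T' is cyclic-by-p
  refine ⟨T', ⟨S₀.subgroupOf T', ?_, ?_, ?_, ⟨m, hmT'⟩, ?_⟩, hmapT'⟩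
  · constructor
    rintro ⟨n, hnT'⟩ hn ⟨t, htT'⟩
    rw [Subgroup.mem_subgroupOf] at hn ⊢
    have htnorm : t ∈ (normalizer (S₀ : Set G)) := hT'M htT'
    simpa using (Subgroup.mem_normalizer_iff.mp htnorm n).mp hn
  · exact hS₀p.of_equiv (Subgroup.subgroupOfEquivOfLe hS₀T').symm
  · have hd : S₀.relIndex T' ∣ S₀.relIndex (normalizer (S₀ : Set G)) :=
      ⟨_, (Subgroup.relIndex_mul_relIndex _ _ _ hS₀T' hT'M).symm⟩
    have hstep : S₀.relIndex (N ⊓ (normalizer (S₀ : Set G))) * (N ⊓ (normalizer (S₀ : Set G))).relIndex (normalizer (S₀ : Set G))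
        = S₀.relIndex (normalizer (S₀ : Set G)) :=
      Subgroup.relIndex_mul_relIndex _ _ _ (le_inf hS₀N Subgroup.le_normalizer) inf_le_right
    have hA : ¬ p ∣ S₀.relIndex (N ⊓ (normalizer (S₀ : Set G))) := fun hdvd => hndS (hdvd.trans
      ⟨_, (Subgroup.relIndex_mul_relIndex _ _ _
        (le_inf hS₀N Subgroup.le_normalizer) inf_le_left).symm⟩)
    have hB : ¬ p ∣ (N ⊓ (normalizer (S₀ : Set G))).relIndex (normalizer (S₀ : Set G)) := by
      rw [Subgroup.inf_relIndex_right]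
      intro hdvd
      have hdd : p ∣ N.index := hdvd.trans (Subgroup.relIndex_dvd_index_of_normal N _)
      rw [hN, Subgroup.index_comap_of_surjective _ hφ] at hdd
      exact (hp.out.coprime_iff_not_dvd.mp hPidx.symm) hdd
    have hnd : ¬ p ∣ S₀.relIndex (normalizer (S₀ : Set G)) := by
      rw [← hstep]
      exact fun h => ((Nat.Prime.dvd_mul hp.out).mp h).elim hA hB
    have : ¬ p ∣ (S₀.subgroupOf T').index := fun h => hnd (h.trans hd)
    exact (hp.out.coprime_iff_not_dvd.mpr this).symm
  · rintro ⟨h, hhT'⟩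
    obtain ⟨n, hn⟩ := aux_sup_zpowers S₀ m hm h hhT'
    refine ⟨n, ?_⟩
    rw [Subgroup.mem_subgroupOf]
    simpa using hn

theorem stmt0 {G Γ : Type*} [Group G] [Group Γ] [Finite G]
    (p : ℕ) [Fact p.Prime] (π : G →* Γ) (hπ : Function.Surjective π)
    (T : Subgroup Γ) (hT : IsCyclicByP p T) :
    ∃ T' : Subgroup G, IsCyclicByP p T' ∧ T'.map π = T := by
  classical
  set H : Subgroup G := T.comap π with hH
  let φ : ↥H →* ↥T := (π.comp H.subtype).codRestrict T (fun x => x.2)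
  have hφsurj : Function.Surjective φ := by
    rintro ⟨t, ht⟩
    obtain ⟨x, hx⟩ := hπ t
    exact ⟨⟨x, by simp [hH, Subgroup.mem_comap, hx, ht]⟩, Subtype.ext (by exact hx)⟩
  obtain ⟨S', hS'cyc, hS'top⟩ := lemB p φ hφsurj hT
  refine ⟨S'.map H.subtype,
    isCyclicByP_of_mulEquiv (S'.equivMapOfInjective H.subtype H.subtype_injective) hS'cyc, ?_⟩
  rw [Subgroup.map_map]
  have hcomp : π.comp H.subtype = T.subtype.comp φ := by ext x; rfl
  rw [hcomp, ← Subgroup.map_map, hS'top, ← MonoidHom.range_eq_map, Subgroup.range_subtype]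
end

section
/- Let p be an odd prime and G a finite group such that every cyclic-by-p subgroup of G is either cyclic or dihedral of order 2·p^n for some n. Let Q be a nontrivial p-subgroup of G. If x ∈ N_G(Q) does not centralize Q, then x is an involution acting by inversion on C_G(Q), and C_G(Q) is abelian. -/
open Subgroup

section Aux

variable {G : Type*} [Group G] {p : ℕ}

/-- A `p`-subgroup is trivially cyclic-by-`p`. -/
theorem aux_pgroup_isCyclicByP (R : Subgroup G) (hR : IsPGroup p R) :
    IsCyclicByP p R := by
  refine ⟨⊤, inferInstance, hR.of_equiv Subgroup.topEquiv.symm, ?_, 1, fun h => ⟨0, mem_top _⟩⟩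
  rw [Subgroup.index_top]
  exact Nat.coprime_one_left p

/-- In a `p`-group with `p` odd there is no element of order two. -/
theorem aux_no_order_two [Fact p.Prime] (hp : Odd p) {R : Subgroup G} (hR : IsPGroup p R)
    (t : R) (ht : orderOf t = 2) : False := by
  obtain ⟨k, hk⟩ := hR t
  have h2 : (2 : ℕ) ∣ p ^ k := ht ▸ orderOf_dvd_of_pow_eq_one hk
  have h2p : (2 : ℕ) ∣ p := Nat.Prime.dvd_of_dvd_pow Nat.prime_two h2
  have : p = 2 := ((Nat.prime_dvd_prime_iff_eq Nat.prime_two Fact.out).mp h2p).symm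
  rw [this] at hp
  exact (Nat.not_odd_iff_even.mpr (by norm_num)) hp

variable [Finite G]

/-- Every `p`-subgroup of `G` is cyclic, under the main hypothesis. -/
theorem aux_pgroup_isCyclic [Fact p.Prime] (hp : Odd p)
    (hG : ∀ H : Subgroup G, IsCyclicByP p H →
      IsCyclic H ∨ ∃ n : ℕ, Nonempty (H ≃* DihedralGroup (p ^ n)))
    (R : Subgroup G) (hR : IsPGroup p R) : IsCyclic R := by
  rcases hG R (aux_pgroup_isCyclicByP R hR) with h | ⟨n, ⟨e⟩⟩
  · exact h
  · exfalso
    refine aux_no_order_two hp hR (e.symm (DihedralGroup.sr 0)) ?_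
    rw [e.symm.orderOf_eq]
    exact DihedralGroup.orderOf_sr 0

/-- Decomposition of elements of `R ⊔ zpowers g` when `g` normalizes `R`. -/
theorem aux_mem_sup_zpowers {R : Subgroup G} {g : G} (hg : g ∈ Subgroup.normalizer (R : Set G))
    {h : G} (hh : h ∈ R ⊔ Subgroup.zpowers g) :
    ∃ (n : ℤ) (r : G), r ∈ R ∧ h = g ^ n * r := by
  rw [Subgroup.sup_eq_closure] at hh
  induction hh using Subgroup.closure_induction with
  | mem x hx =>
    rcases hx with hx | hx
    · exact ⟨0, x, hx, by simp⟩
    · obtain ⟨n, rfl⟩ := hx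
      exact ⟨n, 1, R.one_mem, by simp⟩
  | one => exact ⟨0, 1, R.one_mem, by simp⟩
  | mul x y hx hy ihx ihy =>
    obtain ⟨n, r, hr, rfl⟩ := ihx
    obtain ⟨m, s, hs, rfl⟩ := ihy
    have hgm : g ^ m ∈ Subgroup.normalizer (R : Set G) := zpow_mem hg m
    have hr' : (g ^ m)⁻¹ * r * g ^ m ∈ R := by
      have := (Subgroup.mem_normalizer_iff''.mp hgm r).mp hr
      exact this
    refine ⟨n + m, ((g ^ m)⁻¹ * r * g ^ m) * s, R.mul_mem hr' hs, ?_⟩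
    rw [zpow_add]
    group
  | inv x hx ihx =>
    obtain ⟨n, r, hr, rfl⟩ := ihx
    have hgn : g ^ n ∈ Subgroup.normalizer (R : Set G) := zpow_mem hg n
    have hr' : g ^ n * r⁻¹ * (g ^ n)⁻¹ ∈ R :=
      (Subgroup.mem_normalizer_iff.mp hgn r⁻¹).mp (R.inv_mem hr)
    refine ⟨-n, g ^ n * r⁻¹ * (g ^ n)⁻¹, hr', ?_⟩
    rw [zpow_neg]
    group

/-- Main dichotomy: an element of order prime to `p` normalizing but not centralizing a
`p`-subgroup is an involution acting by inversion on it. -/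
theorem aux_inverts [Fact p.Prime] (hp : Odd p)
    (hG : ∀ H : Subgroup G, IsCyclicByP p H →
      IsCyclic H ∨ ∃ n : ℕ, Nonempty (H ≃* DihedralGroup (p ^ n)))
    (R : Subgroup G) (hRp : IsPGroup p R)
    (g : G) (hg : g ∈ Subgroup.normalizer (R : Set G)) (hgc : g ∉ Subgroup.centralizer (R : Set G))
    (hgo : (orderOf g).Coprime p) :
    g ^ 2 = 1 ∧ ∀ r ∈ R, g * r * g⁻¹ = r⁻¹ := by
  set H : Subgroup G := R ⊔ Subgroup.zpowers g with hHdef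
  have hRH : R ≤ H := le_sup_left
  have hgH : g ∈ H := (le_sup_right : Subgroup.zpowers g ≤ H) (Subgroup.mem_zpowers g)
  have hHnorm : H ≤ Subgroup.normalizer (R : Set G) := sup_le Subgroup.le_normalizer (Subgroup.zpowers_le.mpr hg)
  set R' : Subgroup H := R.subgroupOf H with hR'def
  have hN : R'.Normal := by
    constructor
    intro n hn h
    rw [Subgroup.mem_subgroupOf] at hn ⊢
    have : (h : G) ∈ Subgroup.normalizer (R : Set G) := hHnorm h.2
    exact (Subgroup.mem_normalizer_iff.mp this n).mp hn
  have hR'p : IsPGroup p R' := hRp.comap_subtype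
  set g' : H := ⟨g, hgH⟩ with hg'def
  have hcoset : ∀ h : H, ∃ n : ℤ, g' ^ n * h⁻¹ ∈ R' := by
    intro h
    obtain ⟨n, r, hr, hh⟩ := aux_mem_sup_zpowers hg h.2
    refine ⟨n, ?_⟩
    rw [Subgroup.mem_subgroupOf]
    have : ((g' ^ n * h⁻¹ : H) : G) = g ^ n * (h : G)⁻¹ := rfl
    rw [this, hh, mul_inv_rev, ← mul_assoc]
    have hgn : g ^ n ∈ Subgroup.normalizer (R : Set G) := zpow_mem hg n
    exact (Subgroup.mem_normalizer_iff.mp hgn r⁻¹).mp (R.inv_mem hr)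
  haveI := hN
  set q : H ⧸ R' := QuotientGroup.mk g' with hqdef
  have hgen : ∀ z : H ⧸ R', z ∈ Subgroup.zpowers q := by
    intro z
    obtain ⟨h, rfl⟩ := QuotientGroup.mk_surjective z
    obtain ⟨n, hn⟩ := hcoset h
    have hn' : h⁻¹ * g' ^ n ∈ R' := hN.mem_comm hn
    refine ⟨n, ?_⟩
    show (QuotientGroup.mk g' : H ⧸ R') ^ n = QuotientGroup.mk h
    rw [← QuotientGroup.mk_zpow]
    exact (QuotientGroup.eq.mpr hn').symm
  have hztop : Subgroup.zpowers q = ⊤ := (Subgroup.eq_top_iff' _).mpr hgen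
  have hindex : R'.index = orderOf q := by
    rw [Subgroup.index, ← Subgroup.card_top (G := H ⧸ R'), ← hztop, Nat.card_zpowers]
  have hqord : orderOf q ∣ orderOf g := by
    apply orderOf_dvd_of_pow_eq_one
    have hg'1 : g' ^ orderOf g = 1 := by
      apply Subtype.ext
      show g ^ orderOf g = 1
      exact pow_orderOf_eq_one g
    rw [hqdef, ← QuotientGroup.mk_pow, hg'1, QuotientGroup.mk_one]
  have hcop : R'.index.Coprime p := by
    rw [hindex]
    exact Nat.Coprime.coprime_dvd_left hqord hgo
  have hCBP : IsCyclicByP p H := ⟨R', hN, hR'p, hcop, g', hcoset⟩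
  rcases hG H hCBP with hcyc | ⟨n, ⟨e⟩⟩
  · exfalso
    apply hgc
    obtain ⟨gen, hgen2⟩ := hcyc.exists_generator
    rw [Subgroup.mem_centralizer_iff]
    intro r hr
    obtain ⟨i, hi⟩ := hgen2 ⟨r, hRH hr⟩
    obtain ⟨j, hj⟩ := hgen2 g'
    have : (⟨r, hRH hr⟩ : H) * g' = g' * ⟨r, hRH hr⟩ := by
      rw [← hi, ← hj, zpow_mul_comm]
    exact congrArg Subtype.val this
  · have hrot : ∀ (r : G) (hr : r ∈ R), ∃ i, e ⟨r, hRH hr⟩ = DihedralGroup.r i := by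
      intro r hr
      rcases he : e ⟨r, hRH hr⟩ with i | i
      · exact ⟨i, rfl⟩
      · exfalso
        have h2 : orderOf (⟨r, hr⟩ : R) = 2 := by
          have e1 : orderOf ((⟨r, hr⟩ : R) : G) = orderOf (⟨r, hr⟩ : R) :=
            Subgroup.orderOf_coe _
          have e2 : orderOf ((⟨r, hRH hr⟩ : H) : G) = orderOf (⟨r, hRH hr⟩ : H) :=
            Subgroup.orderOf_coe _
          have e3 : orderOf (⟨r, hRH hr⟩ : H) = 2 := by
            rw [← e.orderOf_eq, he]
            exact DihedralGroup.orderOf_sr i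
          rw [← e1]
          show orderOf r = 2
          rw [show orderOf r = orderOf ((⟨r, hRH hr⟩ : H) : G) from rfl, e2, e3]
        exact aux_no_order_two hp hRp _ h2
    have hsr : ∃ i, e g' = DihedralGroup.sr i := by
      rcases he : e g' with i | i
      · exfalso
        apply hgc
        rw [Subgroup.mem_centralizer_iff]
        intro r hr
        obtain ⟨j, hj⟩ := hrot r hr
        have : (⟨r, hRH hr⟩ : H) * g' = g' * ⟨r, hRH hr⟩ := by
          apply e.injective
          rw [map_mul, map_mul, he, hj, DihedralGroup.r_mul_r, DihedralGroup.r_mul_r, add_comm]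
        exact congrArg Subtype.val this
      · exact ⟨i, rfl⟩
    obtain ⟨i, hi⟩ := hsr
    have hsrinv : (DihedralGroup.sr i)⁻¹ = DihedralGroup.sr i :=
      inv_eq_of_mul_eq_one_right (DihedralGroup.sr_mul_self i)
    have hg2 : g' ^ 2 = 1 := by
      apply e.injective
      rw [map_pow, hi, map_one, sq, DihedralGroup.sr_mul_self]
    constructor
    · exact congrArg Subtype.val hg2
    · intro r hr
      obtain ⟨j, hj⟩ := hrot r hr
      have hrj : (DihedralGroup.r j)⁻¹ = DihedralGroup.r (-j) :=
        inv_eq_of_mul_eq_one_right (by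
          rw [DihedralGroup.r_mul_r, add_neg_cancel, DihedralGroup.one_def])
      have : g' * ⟨r, hRH hr⟩ * g'⁻¹ = (⟨r, hRH hr⟩ : H)⁻¹ := by
        apply e.injective
        rw [map_mul, map_mul, map_inv, map_inv, hi, hj, hsrinv, DihedralGroup.sr_mul_r,
          DihedralGroup.sr_mul_sr, hrj]
        congr 1
        ring
      exact congrArg Subtype.val this

/-- A `p`-element normalizing a `p`-subgroup centralizes it. -/
theorem aux_pelem_centralizes [Fact p.Prime] (hp : Odd p)
    (hG : ∀ H : Subgroup G, IsCyclicByP p H →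
      IsCyclic H ∨ ∃ n : ℕ, Nonempty (H ≃* DihedralGroup (p ^ n)))
    (R : Subgroup G) (hRp : IsPGroup p R)
    (a : G) (ha : a ∈ Subgroup.normalizer (R : Set G)) (hap : IsPGroup p (Subgroup.zpowers a)) :
    a ∈ Subgroup.centralizer (R : Set G) := by
  set H : Subgroup G := R ⊔ Subgroup.zpowers a with hHdef
  have hHp : IsPGroup p H :=
    IsPGroup.to_sup_of_normal_left' hRp hap (Subgroup.zpowers_le.mpr ha)
  have hcyc : IsCyclic H := aux_pgroup_isCyclic hp hG H hHp
  obtain ⟨gen, hgen⟩ := hcyc.exists_generator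
  rw [Subgroup.mem_centralizer_iff]
  intro r hr
  have hrH : r ∈ H := (le_sup_left : R ≤ H) hr
  have haH : a ∈ H := (le_sup_right : Subgroup.zpowers a ≤ H) (Subgroup.mem_zpowers a)
  obtain ⟨i, hi⟩ := hgen ⟨r, hrH⟩
  obtain ⟨j, hj⟩ := hgen ⟨a, haH⟩
  have : (⟨r, hrH⟩ : H) * ⟨a, haH⟩ = ⟨a, haH⟩ * ⟨r, hrH⟩ := by
    rw [← hi, ← hj, zpow_mul_comm]
  exact congrArg Subtype.val this

/-- The key step: every element of `N(Q) \ C(Q)` is an involution inverting `Q`. -/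
theorem aux_key [Fact p.Prime] (hp : Odd p)
    (hG : ∀ H : Subgroup G, IsCyclicByP p H →
      IsCyclic H ∨ ∃ n : ℕ, Nonempty (H ≃* DihedralGroup (p ^ n)))
    (Q : Subgroup G) (hQp : IsPGroup p Q)
    (g : G) (hg : g ∈ Subgroup.normalizer (Q : Set G)) (hgc : g ∉ Subgroup.centralizer (Q : Set G)) :
    g ^ 2 = 1 ∧ ∀ q ∈ Q, g * q * g⁻¹ = q⁻¹ := by
  have hN0 : orderOf g ≠ 0 := (orderOf_pos g).ne'
  set N := orderOf g with hNdef
  set k := N.factorization p with hkdef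
  set m := N / p ^ k with hmdef
  have hNm : p ^ k * m = N := Nat.ordProj_mul_ordCompl_eq_self N p
  have hcm : Nat.Coprime p m := Nat.coprime_ordCompl Fact.out hN0
  have hcop : Nat.Coprime (p ^ k) m := Nat.Coprime.pow_left k hcm
  have hicop : IsCoprime ((p ^ k : ℕ) : ℤ) ((m : ℕ) : ℤ) := Nat.isCoprime_iff_coprime.mpr hcop
  obtain ⟨u, v, huv⟩ := hicop
  set a := g ^ (v * (m : ℤ)) with hadef
  set b := g ^ (u * ((p ^ k : ℕ) : ℤ)) with hbdef
  have hgN : g ^ ((N : ℕ) : ℤ) = 1 := by rw [zpow_natCast]; exact pow_orderOf_eq_one g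
  have hab : a * b = g := by
    rw [hadef, hbdef, ← zpow_add, ← zpow_one g]
    congr 1
    rw [zpow_one]
    omega
  have hcomm : a * b = b * a := by
    rw [hadef, hbdef, ← zpow_add, ← zpow_add, add_comm]
  have hapk : a ^ (p ^ k) = 1 := by
    rw [hadef, ← zpow_natCast, ← zpow_mul]
    have : v * (m : ℤ) * ((p ^ k : ℕ) : ℤ) = ((N : ℕ) : ℤ) * v := by
      push_cast
      rw [← hNm]
      push_cast
      ring
    rw [this, zpow_mul, hgN, one_zpow]
  have hbm : b ^ m = 1 := by
    rw [hbdef, ← zpow_natCast, ← zpow_mul]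
    have : u * ((p ^ k : ℕ) : ℤ) * ((m : ℕ) : ℤ) = ((N : ℕ) : ℤ) * u := by
      push_cast
      rw [← hNm]
      push_cast
      ring
    rw [this, zpow_mul, hgN, one_zpow]
  have hap : IsPGroup p (Subgroup.zpowers a) := by
    intro x
    refine ⟨k, ?_⟩
    obtain ⟨t, ht⟩ := Subgroup.mem_zpowers_iff.mp x.2
    apply Subtype.ext
    show (x : G) ^ (p ^ k) = 1
    rw [← ht, ← zpow_natCast (a ^ t), ← zpow_mul, mul_comm, zpow_mul, zpow_natCast, hapk,
      one_zpow]
  have han : a ∈ Subgroup.normalizer (Q : Set G) := zpow_mem hg _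
  have hbn : b ∈ Subgroup.normalizer (Q : Set G) := zpow_mem hg _
  have haC : a ∈ Subgroup.centralizer (Q : Set G) :=
    aux_pelem_centralizes hp hG Q hQp a han hap
  have hbc : b ∉ Subgroup.centralizer (Q : Set G) := by
    intro hbC
    exact hgc (hab ▸ mul_mem haC hbC)
  have hbo : (orderOf b).Coprime p :=
    Nat.Coprime.coprime_dvd_left (orderOf_dvd_of_pow_eq_one hbm) hcm.symm
  set T : Subgroup G := Q ⊔ Subgroup.zpowers a with hTdef
  have haQn : Subgroup.zpowers a ≤ Subgroup.normalizer (Q : Set G) := Subgroup.zpowers_le.mpr han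
  have hTp : IsPGroup p T := IsPGroup.to_sup_of_normal_left' hQp hap haQn
  have haT : a ∈ T := (le_sup_right : Subgroup.zpowers a ≤ T) (Subgroup.mem_zpowers a)
  have hba : b * a * b⁻¹ = a := by
    have : b * a = a * b := hcomm.symm
    rw [this, mul_inv_cancel_right]
  have hbT : b ∈ Subgroup.normalizer (T : Set G) := by
    have hmap : T.map (MulAut.conj b).toMonoidHom = T := by
      rw [hTdef, Subgroup.map_sup, MonoidHom.map_zpowers]
      have h1 : Q.map (MulAut.conj b).toMonoidHom = Q := by
        ext x
        simp only [Subgroup.mem_map]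
        constructor
        · rintro ⟨y, hy, rfl⟩
          show b * y * b⁻¹ ∈ Q
          exact (Subgroup.mem_normalizer_iff.mp hbn y).mp hy
        · intro hx
          refine ⟨b⁻¹ * x * b, (Subgroup.mem_normalizer_iff''.mp hbn x).mp hx, ?_⟩
          show b * (b⁻¹ * x * b) * b⁻¹ = x
          group
        
      have h2 : (MulAut.conj b).toMonoidHom a = a := by
        show b * a * b⁻¹ = a
        exact hba
      rw [h1, h2]
    rw [Subgroup.mem_normalizer_iff]
    intro h
    constructor
    · intro hh
      have : (MulAut.conj b).toMonoidHom h ∈ T.map (MulAut.conj b).toMonoidHom :=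
        Subgroup.mem_map_of_mem _ hh
      rw [hmap] at this
      exact this
    · intro hh
      rw [← hmap] at hh
      obtain ⟨y, hy, hyx⟩ := hh
      have : y = h := by
        apply (MulAut.conj b).injective
        exact hyx
      rwa [← this]
  have hbcT : b ∉ Subgroup.centralizer (T : Set G) := by
    intro hb
    apply hbc
    rw [Subgroup.mem_centralizer_iff]
    intro q hq
    exact Subgroup.mem_centralizer_iff.mp hb q ((le_sup_left : Q ≤ T) hq)
  obtain ⟨hb2, hbinv⟩ := aux_inverts hp hG T hTp b hbT hbcT hbo
  have ha1 : a = 1 := by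
    have hinv := hbinv a haT
    have haeq : a = a⁻¹ := by rw [← hinv, hba]
    have ha2 : a ^ 2 = 1 := by
      rw [sq]
      nth_rewrite 2 [haeq]
      exact mul_inv_cancel a
    have hdvd2 : orderOf a ∣ 2 := orderOf_dvd_of_pow_eq_one ha2
    have hdvdp : orderOf a ∣ p ^ k := orderOf_dvd_of_pow_eq_one hapk
    have hdvd : orderOf a ∣ Nat.gcd 2 (p ^ k) := Nat.dvd_gcd hdvd2 hdvdp
    have hgcd : Nat.gcd 2 (p ^ k) = 1 := Nat.coprime_two_left.mpr (hp.pow)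
    rw [hgcd, Nat.dvd_one] at hdvd
    exact orderOf_eq_one_iff.mp hdvd
  have hgb : g = b := by rw [← hab, ha1, one_mul]
  constructor
  · rw [hgb]; exact hb2
  · intro q hq
    rw [hgb]
    exact hbinv q ((le_sup_left : Q ≤ T) hq)

end Aux

theorem stmt2 {G : Type*} [Group G] [Finite G] (p : ℕ) [Fact p.Prime] (hp : Odd p)
    (hG : ∀ H : Subgroup G, IsCyclicByP p H →
      IsCyclic H ∨ ∃ n : ℕ, Nonempty (H ≃* DihedralGroup (p ^ n)))
    (Q : Subgroup G) (hQ : Q ≠ ⊥) (hQp : IsPGroup p Q)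
    (x : G) (hx : x ∈ Subgroup.normalizer (Q : Set G)) (hxc : x ∉ Subgroup.centralizer (Q : Set G)) :
    x ≠ 1 ∧ x ^ 2 = 1 ∧
    (∀ a ∈ Subgroup.centralizer (Q : Set G), x * a * x⁻¹ = a⁻¹) ∧
    (∀ a ∈ Subgroup.centralizer (Q : Set G), ∀ b ∈ Subgroup.centralizer (Q : Set G),
      a * b = b * a) := by
  obtain ⟨hx2, _⟩ := aux_key hp hG Q hQp x hx hxc
  -- the centralizer is contained in the normalizer
  have hCN : ∀ c ∈ Subgroup.centralizer (Q : Set G), c ∈ Subgroup.normalizer (Q : Set G) := by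
    intro c hc
    rw [Subgroup.mem_normalizer_iff]
    intro h
    constructor
    · intro hh
      have hcomm := Subgroup.mem_centralizer_iff.mp hc h hh
      have : c * h * c⁻¹ = h := by rw [← hcomm, mul_inv_cancel_right]
      rwa [this]
    · intro hh
      have hcomm := Subgroup.mem_centralizer_iff.mp hc _ hh
      -- hcomm : (c * h * c⁻¹) * c = c * (c * h * c⁻¹)
      have h4 : c * h = c * (c * h * c⁻¹) := by
        rw [← hcomm]
        group
      have heq : h = c * h * c⁻¹ := mul_left_cancel h4
      rw [heq]
      exact hh
  -- inversion on the centralizer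
  have hinv : ∀ a ∈ Subgroup.centralizer (Q : Set G), x * a * x⁻¹ = a⁻¹ := by
    intro a ha
    have hax : a * x ∈ Subgroup.normalizer (Q : Set G) := mul_mem (hCN a ha) hx
    have haxc : a * x ∉ Subgroup.centralizer (Q : Set G) := by
      intro hmem
      apply hxc
      have : a⁻¹ * (a * x) ∈ Subgroup.centralizer (Q : Set G) := mul_mem (inv_mem ha) hmem
      rwa [inv_mul_cancel_left] at this
    obtain ⟨h2, _⟩ := aux_key hp hG Q hQp (a * x) hax haxc
    have h2' : a * x * (a * x) = 1 := by rw [← sq]; exact h2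
    have hxx : x * x = 1 := by rw [← sq]; exact hx2
    have hxinv : x⁻¹ = x := inv_eq_of_mul_eq_one_right hxx
    rw [hxinv]
    apply mul_left_cancel (a := a)
    calc a * (x * a * x) = a * x * (a * x) := by group
      _ = 1 := h2'
      _ = a * a⁻¹ := (mul_inv_cancel a).symm
  refine ⟨?_, hx2, hinv, ?_⟩
  · intro h1
    exact hxc (h1 ▸ one_mem _)
  · intro a ha b hb
    have hab := hinv (a * b) (mul_mem ha hb)
    have ha' := hinv a ha
    have hb' := hinv b hb
    have h1 : x * (a * b) * x⁻¹ = (x * a * x⁻¹) * (x * b * x⁻¹) := by group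
    rw [hab, ha', hb', mul_inv_rev] at h1
    -- h1 : b⁻¹ * a⁻¹ = a⁻¹ * b⁻¹
    have := congrArg (fun z => z⁻¹) h1
    simp only [mul_inv_rev, inv_inv] at this
    exact this
end

section
/- Let G be a finite group with cyclic Sylow p-subgroup P, and set R = O_{p'}(G), the largest normal subgroup of G of order prime to p. Then the following are equivalent: (1) G = RP; (2) N_G(P) = C_G(P); (3) N_G(Q) = C_G(Q) for every nontrivial subgroup Q of P. -/
private lemma centralizer_le_normalizer' {G : Type*} [Group G] (Q : Subgroup G) :
    Subgroup.centralizer (Q : Set G) ≤ Subgroup.normalizer (Q : Set G) := by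
  intro x hx
  rw [Subgroup.mem_centralizer_iff] at hx
  rw [Subgroup.mem_normalizer_iff]
  intro h
  constructor
  · intro hh
    have h1 := hx h hh
    have : x * h * x⁻¹ = h := by rw [← h1]; group
    rwa [this]
  · intro hh
    have h1 := hx _ hh
    have : h = x * h * x⁻¹ := by
      have h2 : (x * h * x⁻¹) * x = x * (x * h * x⁻¹) := h1
      have h3 : x * h = x * (x * h * x⁻¹) := by
        calc x * h = (x * h * x⁻¹) * x := by group
        _ = x * (x * h * x⁻¹) := h2
      exact mul_left_cancel h3
    rwa [← this] at hh

theorem stmt4 {G : Type*} [Group G] [Finite G] (p : ℕ) [Fact p.Prime]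
    (P : Sylow p G) (hP : IsCyclic (P : Subgroup G))
    (R : Subgroup G) (hRn : R.Normal) (hR : (Nat.card R).Coprime p)
    (hmax : ∀ S : Subgroup G, S.Normal → (Nat.card S).Coprime p → S ≤ R) :
    List.TFAE [
      ∀ g : G, ∃ r ∈ R, ∃ x ∈ (P : Subgroup G), g = r * x,
      Subgroup.normalizer ((P : Subgroup G) : Set G) = Subgroup.centralizer ((P : Subgroup G) : Set G),
      ∀ Q : Subgroup G, Q ≠ ⊥ → Q ≤ P → Subgroup.normalizer (Q : Set G) = Subgroup.centralizer (Q : Set G)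
    ] := by
  have hp : p.Prime := Fact.out
  -- P is commutative since cyclic
  have hcomm : ∀ x ∈ (P : Subgroup G), ∀ y ∈ (P : Subgroup G), x * y = y * x := by
    intro x hx y hy
    letI := hP.commGroup
    have : (⟨x, hx⟩ : (P : Subgroup G)) * ⟨y, hy⟩ = ⟨y, hy⟩ * ⟨x, hx⟩ := mul_comm _ _
    exact congrArg Subtype.val this
  tfae_have 1 → 3 := by
    intro h1 Q hQne hQP
    apply le_antisymm
    · intro g hg
      obtain ⟨r, hr, x, hx, rfl⟩ := h1 g
      -- x centralizes Q since P is abelian and Q ≤ P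
      have hxC : x ∈ Subgroup.centralizer (Q : Set G) := by
        rw [Subgroup.mem_centralizer_iff]
        intro q hq
        exact hcomm q (hQP hq) x hx
      have hxN : x ∈ Subgroup.normalizer (Q : Set G) := centralizer_le_normalizer' Q hxC
      have hrN : r ∈ Subgroup.normalizer (Q : Set G) := by
        have : r * x * x⁻¹ ∈ Subgroup.normalizer (Q : Set G) := mul_mem hg (inv_mem hxN)
        simpa using this
      -- R ⊓ Q = ⊥ by coprimality
      have hQp : IsPGroup p Q := P.2.to_le hQP
      obtain ⟨k, hk⟩ := hQp.exists_card_eq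
      have hinf : R ⊓ Q = ⊥ := by
        apply Subgroup.inf_eq_bot_of_coprime
        rw [hk]
        exact hR.pow_right k
      -- r centralizes Q
      have hrC : r ∈ Subgroup.centralizer (Q : Set G) := by
        rw [Subgroup.mem_centralizer_iff]
        intro q hq
        have hc1 : r * q * r⁻¹ * q⁻¹ ∈ Q := by
          have : r * q * r⁻¹ ∈ Q := by
            rw [Subgroup.mem_normalizer_iff] at hrN
            exact (hrN q).mp hq
          exact mul_mem this (inv_mem hq)
        have hc2 : r * q * r⁻¹ * q⁻¹ ∈ R := by
          have : q * r⁻¹ * q⁻¹ ∈ R := hRn.conj_mem r⁻¹ (inv_mem hr) q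
          have h2 : r * (q * r⁻¹ * q⁻¹) ∈ R := mul_mem hr this
          have h3 : r * (q * r⁻¹ * q⁻¹) = r * q * r⁻¹ * q⁻¹ := by group
          rwa [h3] at h2
        have : r * q * r⁻¹ * q⁻¹ ∈ R ⊓ Q := ⟨hc2, hc1⟩
        rw [hinf, Subgroup.mem_bot] at this
        have : r * q * r⁻¹ = q := by
          have := mul_eq_one_iff_eq_inv.mp this
          rw [this]; group
        calc q * r = (r * q * r⁻¹) * r := by rw [this]
        _ = r * q := by group
      exact mul_mem hrC hxC
    · exact centralizer_le_normalizer' Q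
  tfae_have 3 → 2 := by
    intro h3
    by_cases hb : (P : Subgroup G) = ⊥
    · rw [hb]
      have h1 : Subgroup.normalizer ((⊥ : Subgroup G) : Set G) = ⊤ :=
        Subgroup.normalizer_eq_top_iff.mpr inferInstance
      have h2 : Subgroup.centralizer ((⊥ : Subgroup G) : Set G) = ⊤ := by
        rw [eq_top_iff]
        intro g _
        rw [Subgroup.mem_centralizer_iff]
        intro h hh
        simp only [Subgroup.coe_bot, Set.mem_singleton_iff] at hh
        simp [hh]
      rw [h1, h2]
    · exact h3 P hb le_rfl
  tfae_have 2 → 1 := by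
    intro h2 g
    have hle : Subgroup.normalizer ((P : Subgroup G) : Set G) ≤ Subgroup.centralizer ((P : Subgroup G) : Set G) :=
      h2.le
    have hK := MonoidHom.ker_transferSylow_isComplement' P hle
    have hKn : (MonoidHom.transferSylow P hle).ker.Normal := inferInstance
    have hKcop : (Nat.card (MonoidHom.transferSylow P hle).ker).Coprime p :=
      Nat.coprime_comm.mp
        (hp.coprime_iff_not_dvd.mpr (MonoidHom.not_dvd_card_ker_transferSylow P hle))
    have hKR := hmax _ hKn hKcop
    obtain ⟨⟨k, x⟩, hkx⟩ := (hK.existsUnique g).exists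
    exact ⟨k, hKR k.2, x, x.2, hkx.symm⟩
  tfae_finish
end

section
/- Let G be a finite group with cyclic Sylow p-subgroup P such that N_G(Q) = C_G(Q) for every nontrivial subgroup Q of P. Then every cyclic-by-p subgroup of G is cyclic. -/
theorem stmt5 {G : Type*} [Group G] [Finite G] (p : ℕ) [Fact p.Prime]
    (P : Sylow p G) (hP : IsCyclic (P : Subgroup G))
    (h : ∀ Q : Subgroup G, Q ≠ ⊥ → Q ≤ P → Subgroup.normalizer (Q : Set G) = Subgroup.centralizer (Q : Set G)) :
    ∀ H : Subgroup G, IsCyclicByP p H → IsCyclic H := by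
  rintro H ⟨K, hKn, hKp, hKcop, g, hg⟩
  -- the image of K in G
  set K' : Subgroup G := K.map H.subtype with hK'def
  have hK'p : IsPGroup p K' := hKp.map H.subtype
  -- conjugate K' into P
  obtain ⟨Q, hQ⟩ := hK'p.exists_le_sylow
  obtain ⟨x, hx⟩ := MulAction.exists_smul_eq G Q P
  set c : MulAut G := MulAut.conj x with hcdef
  set Q0 : Subgroup G := K'.map c.toMonoidHom with hQ0def
  have hQ0le : Q0 ≤ (P : Subgroup G) := by
    rintro y ⟨m, hm, rfl⟩
    have hmem : c • m ∈ (↑(x • Q) : Subgroup G) := by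
      rw [Sylow.coe_subgroup_smul]
      exact Subgroup.smul_mem_pointwise_smul m c (Q : Subgroup G) (hQ hm)
    rw [hx] at hmem
    exact hmem
  -- K is cyclic
  haveI hcyc0 : IsCyclic Q0 := by
    haveI := hP
    exact Subgroup.isCyclic_of_le hQ0le
  have eK'Q0 : K' ≃* Q0 := Subgroup.equivMapOfInjective K' c.toMonoidHom c.injective
  haveI hcycK' : IsCyclic K' := isCyclic_of_surjective eK'Q0.symm eK'Q0.symm.surjective
  have eKK' : (K : Subgroup H) ≃* K' := Subgroup.equivMapOfInjective K H.subtype H.subtype_injective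
  haveI hcycK : IsCyclic K := isCyclic_of_surjective eKK'.symm eKK'.symm.surjective
  -- K' is normalized (in fact normal) by elements of H
  have hnorm' : ∀ u : G, u ∈ H → ∀ m : G, m ∈ K' → u * m * u⁻¹ ∈ K' := by
    rintro u hu m ⟨k₁, hk₁, rfl⟩
    exact ⟨⟨u, hu⟩ * k₁ * ⟨u, hu⟩⁻¹, hKn.conj_mem k₁ hk₁ ⟨u, hu⟩, rfl⟩
  -- K' is centralized by elements of H
  have hcenG : ∀ k : G, k ∈ K' → ∀ a : G, a ∈ H → k * a = a * k := by
    by_cases hbot : K' = ⊥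
    · intro k hk a ha
      rw [hbot, Subgroup.mem_bot] at hk
      rw [hk, one_mul, mul_one]
    · intro k hk a ha
      have hQ0ne : Q0 ≠ ⊥ := by
        intro hb
        rw [hQ0def, Subgroup.map_eq_bot_iff_of_injective _ c.injective] at hb
        exact hbot hb
      have heq := h Q0 hQ0ne hQ0le
      have ht : x * a * x⁻¹ ∈ Subgroup.normalizer (Q0 : Set G) := by
        rw [Subgroup.mem_normalizer_iff]
        intro y
        constructor
        · rintro ⟨m, hm, rfl⟩
          refine ⟨a * m * a⁻¹, hnorm' a ha m hm, ?_⟩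
          simp only [hcdef, MulEquiv.coe_toMonoidHom, MulAut.conj_apply]
          group
        · intro hy
          obtain ⟨m, hm, hw⟩ := hy
          refine ⟨a⁻¹ * m * a, ?_, ?_⟩
          · have := hnorm' a⁻¹ (inv_mem ha) m hm
            simpa using this
          · have hw' : x * m * x⁻¹ = (x * a * x⁻¹) * y * (x * a * x⁻¹)⁻¹ := by
              simpa only [hcdef, MulEquiv.coe_toMonoidHom, MulAut.conj_apply] using hw
            have hy2 : y = (x * a * x⁻¹)⁻¹ * (x * m * x⁻¹) * (x * a * x⁻¹) := by
              rw [hw']; group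
            simp only [hcdef, MulEquiv.coe_toMonoidHom, MulAut.conj_apply]
            rw [hy2]
            group
      rw [heq] at ht
      have hk' : c k ∈ Q0 := ⟨k, hk, rfl⟩
      have hcomm := Subgroup.mem_centralizer_iff.mp ht _ hk'
      simp only [hcdef, MulEquiv.coe_toMonoidHom, MulAut.conj_apply] at hcomm
      have h2 : x * (k * a) * x⁻¹ = x * (a * k) * x⁻¹ := by
        calc x * (k * a) * x⁻¹ = (x * k * x⁻¹) * (x * a * x⁻¹) := by group
        _ = (x * a * x⁻¹) * (x * k * x⁻¹) := hcomm
        _ = x * (a * k) * x⁻¹ := by group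
      exact mul_left_cancel (mul_right_cancel h2)
  -- K is central in H
  have hcen : ∀ kk : H, kk ∈ K → ∀ hh : H, kk * hh = hh * kk := by
    intro kk hkk hh
    apply Subtype.ext
    exact hcenG (↑kk) ⟨kk, hkk, rfl⟩ (↑hh) hh.2
  -- now the counting argument inside H
  obtain ⟨a, hcard⟩ := hKp.exists_card_eq
  set m : ℕ := K.index with hmdef
  -- the image of g generates the quotient
  have hgen : ∀ q : H ⧸ K, q ∈ Subgroup.zpowers ((QuotientGroup.mk g : H ⧸ K)) := by
    intro q
    obtain ⟨hh, rfl⟩ := QuotientGroup.mk_surjective q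
    obtain ⟨n, hn⟩ := hg hh
    refine ⟨n, ?_⟩
    show (QuotientGroup.mk g : H ⧸ K) ^ n = QuotientGroup.mk hh
    rw [← QuotientGroup.mk_zpow, QuotientGroup.eq]
    have h4 : (g ^ n)⁻¹ * (hh * (g ^ n)⁻¹) * ((g ^ n)⁻¹)⁻¹ ∈ K :=
      hKn.conj_mem _ (by simpa using inv_mem hn) (g ^ n)⁻¹
    simpa [mul_assoc] using h4
  have hoq : orderOf (QuotientGroup.mk g : H ⧸ K) = m := by
    rw [orderOf_eq_card_of_forall_mem_zpowers hgen]
    exact (Subgroup.index_eq_card K).symm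
  have hmd : m ∣ orderOf g := by
    rw [← hoq]
    exact orderOf_map_dvd (QuotientGroup.mk' K) g
  set d : ℕ := orderOf g with hddef
  have hd0 : d ≠ 0 := (orderOf_pos g).ne'
  set b : ℕ := d.factorization p with hbdef
  have hpb : p ^ b ∣ d := Nat.ordProj_dvd d p
  set m₁ : ℕ := d / p ^ b with hm₁def
  set z : H := g ^ (p ^ b) with hzdef
  have hoz : orderOf z = m₁ := by
    rw [hzdef, orderOf_pow' g (pow_ne_zero b (Fact.out : p.Prime).ne_zero), ← hddef,
      Nat.gcd_eq_right hpb]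
  have hm₁p : Nat.Coprime m₁ p := (Nat.coprime_ordCompl (Fact.out : p.Prime) hd0).symm
  -- generator of K
  obtain ⟨k0, hk0⟩ := hcycK.exists_generator
  have hok0 : orderOf ((k0 : H)) = p ^ a := by
    rw [Subgroup.orderOf_coe, orderOf_eq_card_of_forall_mem_zpowers hk0, hcard]
  have hcommzk : Commute z (k0 : H) := (hcen (k0 : H) k0.2 z).symm
  have hcop2 : Nat.Coprime (orderOf z) (orderOf (k0 : H)) := by
    rw [hoz, hok0]
    exact hm₁p.pow_right a
  have hox : orderOf (z * (k0 : H)) = m₁ * p ^ a :=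
    (hcommzk.orderOf_mul_eq_mul_orderOf_of_coprime hcop2).trans (by rw [hoz, hok0])
  have hcardH : Nat.card H = p ^ a * m := by
    rw [← K.card_mul_index, hcard]
  have hm₁m : m₁ ∣ m := by
    have h3 : m₁ * p ^ a ∣ m * p ^ a := by
      rw [← hox, mul_comm m (p ^ a), ← hcardH]
      exact orderOf_dvd_natCard _
    exact (Nat.mul_dvd_mul_iff_right (pow_pos (Fact.out : p.Prime).pos a)).mp h3
  have hmm₁ : m ∣ m₁ := by
    have hdm : d = p ^ b * m₁ := (Nat.ordProj_mul_ordCompl_eq_self d p).symm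
    have hmpb : Nat.Coprime m (p ^ b) := hKcop.pow_right b
    refine hmpb.dvd_of_dvd_mul_left ?_
    rwa [← hdm]
  have hm₁eq : m₁ = m := Nat.dvd_antisymm hm₁m hmm₁
  refine isCyclic_of_orderOf_eq_card (z * (k0 : H)) ?_
  rw [hox, hm₁eq, hcardH, mul_comm]
end

section
/- Let p be an odd prime and G a finite group such that every cyclic-by-p subgroup of G is cyclic or dihedral of order 2·p^a. Suppose the Sylow p-subgroup P satisfies N_G(P) ≠ C_G(P), and let τ ∈ N_G(P) ∖ C_G(P). Then for every nontrivial subgroup Q ≤ P: C_G(Q) = C_G(P) is abelian, every element of the coset τ·C_G(Q) is an involution inverting C_G(Q), and N_G(Q) = N_G(P). -/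
open Subgroup

section Helpers

variable {G : Type*} [Group G]

lemma conj_zpow_parity {s q : G} (h : s * q * s⁻¹ = q⁻¹) (z : ℤ) :
    (Even z → s ^ z * q * (s ^ z)⁻¹ = q) ∧ (Odd z → s ^ z * q * (s ^ z)⁻¹ = q⁻¹) := by
  have h' : s * q⁻¹ * s⁻¹ = q := by
    have h1 := congrArg Inv.inv h
    simp only [mul_inv_rev, inv_inv] at h1
    rw [← mul_assoc] at h1
    exact h1
  have h2 : s ^ (2:ℤ) * q * (s ^ (2:ℤ))⁻¹ = q := by
    rw [zpow_two]
    calc s * s * q * (s * s)⁻¹ = s * (s * q * s⁻¹) * s⁻¹ := by group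
    _ = s * q⁻¹ * s⁻¹ := by rw [h]
    _ = q := h'
  have hc : Commute (s ^ (2:ℤ)) q := by
    have := h2
    rw [mul_inv_eq_iff_eq_mul] at this
    exact this
  constructor
  · rintro ⟨w, rfl⟩
    have hz : s ^ (w + w) = (s ^ (2:ℤ)) ^ w := by
      rw [← zpow_mul, two_mul]
    rw [hz, (hc.zpow_left w).eq, mul_inv_cancel_right]
  · rintro ⟨w, rfl⟩
    have hz : s ^ (2 * w + 1) = (s ^ (2:ℤ)) ^ w * s := by
      rw [zpow_add, ← zpow_mul, zpow_one]
    have hcq : Commute ((s ^ (2:ℤ)) ^ w) q⁻¹ := (hc.zpow_left w).inv_right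
    rw [hz]
    calc (s ^ (2:ℤ)) ^ w * s * q * ((s ^ (2:ℤ)) ^ w * s)⁻¹
        = (s ^ (2:ℤ)) ^ w * (s * q * s⁻¹) * ((s ^ (2:ℤ)) ^ w)⁻¹ := by group
    _ = (s ^ (2:ℤ)) ^ w * q⁻¹ * ((s ^ (2:ℤ)) ^ w)⁻¹ := by rw [h]
    _ = q⁻¹ := by rw [hcq.eq, mul_inv_cancel_right]

lemma conj_zpow' (a b : G) (k : ℤ) : (a⁻¹ * b * a) ^ k = a⁻¹ * b ^ k * a := by
  have := conj_zpow (i := k) (a := a⁻¹) (b := b)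
  rwa [inv_inv] at this

lemma mem_normalizer_zpowers {a b : G} (h : a * b * a⁻¹ = b ∨ a * b * a⁻¹ = b⁻¹) :
    a ∈ Subgroup.normalizer ((zpowers b : Subgroup G) : Set G) := by
  have hinv : a⁻¹ * b * a = b ∨ a⁻¹ * b * a = b⁻¹ := by
    rcases h with h | h
    · left
      have h1 : a⁻¹ * (a * b * a⁻¹) * a = a⁻¹ * b * a := by rw [h]
      rw [show a⁻¹ * (a * b * a⁻¹) * a = b from by group] at h1
      exact h1.symm
    · right
      have h1 : a⁻¹ * (a * b * a⁻¹) * a = a⁻¹ * b⁻¹ * a := by rw [h]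
      rw [show a⁻¹ * (a * b * a⁻¹) * a = b from by group] at h1
      conv_rhs => rw [h1]
      group
  rw [Subgroup.mem_normalizer_iff]
  intro x
  constructor
  · intro hx
    obtain ⟨k, rfl⟩ := Subgroup.mem_zpowers_iff.mp hx
    rw [show a * b ^ k * a⁻¹ = (a * b * a⁻¹) ^ k from (conj_zpow).symm]
    rcases h with h | h
    · rw [h]; exact zpow_mem (Subgroup.mem_zpowers b) k
    · rw [h, inv_zpow, ← zpow_neg]; exact zpow_mem (Subgroup.mem_zpowers b) (-k)
  · intro hx
    obtain ⟨k, hk⟩ := Subgroup.mem_zpowers_iff.mp hx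
    have hx' : x = a⁻¹ * b ^ k * a := by rw [hk]; group
    rw [hx', ← conj_zpow']
    rcases hinv with h' | h'
    · rw [h']; exact zpow_mem (Subgroup.mem_zpowers b) k
    · rw [h', inv_zpow, ← zpow_neg]; exact zpow_mem (Subgroup.mem_zpowers b) (-k)

lemma map_conj_eq_of_mem_normalizer {K : Subgroup G} {a : G} (hK : a ∈ Subgroup.normalizer (K : Set G)) :
    K.map (MulAut.conj a).toMonoidHom = K := by
  ext x
  constructor
  · rintro ⟨y, hy, rfl⟩
    simpa [MulAut.conj] using (Subgroup.mem_normalizer_iff.mp hK y).mp hy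
  · intro hx
    refine ⟨a⁻¹ * x * a, (Subgroup.mem_normalizer_iff''.mp hK x).mp hx, ?_⟩
    simp [MulAut.conj]
    group

lemma mem_normalizer_sup {A B : Subgroup G} {a : G} (hA : a ∈ Subgroup.normalizer (A : Set G))
    (hB : a ∈ Subgroup.normalizer (B : Set G)) : a ∈ Subgroup.normalizer ((A ⊔ B : Subgroup G) : Set G) := by
  have hmap : (A ⊔ B).map (MulAut.conj a).toMonoidHom = A ⊔ B := by
    rw [Subgroup.map_sup, map_conj_eq_of_mem_normalizer hA, map_conj_eq_of_mem_normalizer hB]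
  rw [Subgroup.mem_normalizer_iff]
  intro h
  constructor
  · intro hh
    have : (MulAut.conj a) h ∈ (A ⊔ B).map (MulAut.conj a).toMonoidHom :=
      Subgroup.mem_map_of_mem _ hh
    rw [hmap] at this
    simpa [MulAut.conj] using this
  · intro hh
    rw [← hmap] at hh
    obtain ⟨y, hy, hyx⟩ := hh
    have : y = h := by
      have h1 : a * y * a⁻¹ = a * h * a⁻¹ := by simpa [MulAut.conj] using hyx
      have h2 := congrArg (fun x => a⁻¹ * x * a) h1
      simpa [mul_assoc] using h2
    rwa [← this]

end Helpers

section Helpers2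

variable {G : Type*} [Group G] {p : ℕ} [Fact p.Prime]
set_option linter.unusedSectionVars false

lemma isPGroup_zpowers' {a : G} {k : ℕ} (ha : a ^ p ^ k = 1) :
    IsPGroup p (Subgroup.zpowers a) := by
  intro x
  refine ⟨k, ?_⟩
  obtain ⟨j, hj⟩ := Subgroup.mem_zpowers_iff.mp x.2
  have hcoe : ((x ^ p ^ k : Subgroup.zpowers a) : G) = (x : G) ^ p ^ k := by
    simp
  have : (x : G) ^ p ^ k = 1 := by
    rw [← hj, ← zpow_natCast (a ^ j), ← zpow_mul, mul_comm, zpow_mul, zpow_natCast, ha, one_zpow]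
  exact Subtype.ext (by rw [hcoe, this]; rfl)

lemma primary_dec [Finite G] (hp : Odd p) (g : G) :
    ∃ (a b : G) (z w : ℤ), a = g ^ z ∧ b = g ^ w ∧ g = b * a ∧
      (∃ k : ℕ, a ^ p ^ k = 1) ∧ (orderOf b).Coprime p ∧
      (Even (orderOf g) → Even z ∧ Odd w) := by
  set n := orderOf g with hn
  have hn0 : n ≠ 0 := (orderOf_pos g).ne'
  set k := n.factorization p with hk
  have hsplit : p ^ k * (n / p ^ k) = n := Nat.ordProj_mul_ordCompl_eq_self n p
  set m := n / p ^ k with hm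
  have hmcop : Nat.Coprime p m := Nat.coprime_ordCompl Fact.out hn0
  have hcop : Nat.Coprime (p ^ k) m := Nat.Coprime.pow_left k hmcop
  set A := Nat.gcdA (p ^ k) m with hA
  set B := Nat.gcdB (p ^ k) m with hB
  have hbez : ((p ^ k : ℕ) : ℤ) * A + (m : ℤ) * B = 1 := by
    have h1 := Nat.gcd_eq_gcd_ab (p ^ k) m
    rw [Nat.Coprime] at hcop
    rw [hcop] at h1
    exact_mod_cast h1.symm
  set z : ℤ := (m : ℤ) * B with hz
  set w : ℤ := ((p ^ k : ℕ) : ℤ) * A with hw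
  have hzw : w + z = 1 := hbez
  have hnz : ((n : ℕ) : ℤ) = ((p ^ k : ℕ) : ℤ) * (m : ℤ) := by exact_mod_cast hsplit.symm
  refine ⟨g ^ z, g ^ w, z, w, rfl, rfl, ?_, ⟨k, ?_⟩, ?_, ?_⟩
  · rw [← zpow_add, hzw, zpow_one]
  · rw [← zpow_natCast (g ^ z), ← zpow_mul]
    have : z * ((p ^ k : ℕ) : ℤ) = (n : ℤ) * B := by rw [hz, hnz]; ring
    rw [this, zpow_mul, zpow_natCast, pow_orderOf_eq_one, one_zpow]
  · have hbm : (g ^ w) ^ m = 1 := by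
      rw [← zpow_natCast (g ^ w), ← zpow_mul]
      have : w * (m : ℤ) = (n : ℤ) * A := by rw [hw, hnz]; ring
      rw [this, zpow_mul, zpow_natCast, pow_orderOf_eq_one, one_zpow]
    exact Nat.Coprime.coprime_dvd_left (orderOf_dvd_of_pow_eq_one hbm) hmcop.symm
  · intro hev
    have hpk : Odd (p ^ k) := hp.pow
    have hmev : Even m := by
      rw [← hsplit] at hev
      rcases Nat.even_mul.mp hev with h | h
      · exact ((Nat.not_even_iff_odd.mpr hpk) h).elim
      · exact h
    have hzev : Even z := by
      rw [hz]
      exact (Int.even_coe_nat m |>.mpr hmev).mul_right B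
    refine ⟨hzev, ?_⟩
    have : w = 1 - z := by omega
    rw [this]
    exact Odd.sub_even odd_one hzev

lemma le_sylow_of_pgroup (P : Sylow p G) {K : Subgroup G} (hK : IsPGroup p K)
    (hle : K ≤ Subgroup.normalizer ((P : Subgroup G) : Set G)) : K ≤ (P : Subgroup G) := by
  have hsup : IsPGroup p ((K ⊔ (P : Subgroup G)) : Subgroup G) :=
    IsPGroup.to_sup_of_normal_right' hK P.isPGroup' hle
  have := P.is_maximal' hsup le_sup_right
  exact le_sup_left.trans (le_of_eq this)

lemma cyclic_subgroup_card_inj {C : Type*} [Group C] [Finite C] (hc : IsCyclic C)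
    {H K : Subgroup C} (hcard : Nat.card H = Nat.card K) : H = K := by
  obtain ⟨g, hg⟩ := hc
  have horder : orderOf g = Nat.card C := by
    rw [← Nat.card_zpowers, (Subgroup.zpowers g).eq_top_iff'.mpr hg, Subgroup.card_top]
  have key : ∀ H : Subgroup C, H = Subgroup.zpowers (g ^ (Nat.card C / Nat.card H)) := by
    intro H
    set d := Nat.card H with hd
    have hd0 : d ≠ 0 := Nat.card_pos.ne'
    have hdvd : d ∣ Nat.card C := Subgroup.card_subgroup_dvd_card H
    set e := Nat.card C / d with he
    have hde : d * e = Nat.card C := Nat.mul_div_cancel' hdvd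
    have hC0 : Nat.card C ≠ 0 := Nat.card_pos.ne'
    have he0 : 0 < e := by
      rcases Nat.eq_zero_or_pos e with h | h
      · exact absurd (by rw [← hde, h, mul_zero]) (Ne.symm hC0)
      · exact h
    have hedvd : e ∣ Nat.card C := ⟨d, by rw [← hde, mul_comm]⟩
    have hle : H ≤ Subgroup.zpowers (g ^ e) := by
      intro x hx
      obtain ⟨a, ha⟩ := Subgroup.mem_zpowers_iff.mp (hg x)
      have hxd : x ^ d = 1 := by
        have h1 : (⟨x, hx⟩ : H) ^ d = 1 := pow_card_eq_one'
        simpa using congrArg Subtype.val h1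
      have hdvd2 : ((Nat.card C : ℕ) : ℤ) ∣ a * (d : ℤ) := by
        rw [← horder, orderOf_dvd_iff_zpow_eq_one, zpow_mul, zpow_natCast, ha, hxd]
      have hcast : ((Nat.card C : ℕ) : ℤ) = (e : ℤ) * (d : ℤ) := by
        exact_mod_cast (by rw [← hde, mul_comm] : Nat.card C = e * d)
      rw [hcast] at hdvd2
      have hdvda : (e : ℤ) ∣ a := by
        have hdz : (d : ℤ) ≠ 0 := Int.natCast_ne_zero.mpr hd0
        exact (mul_dvd_mul_iff_right hdz).mp hdvd2
      obtain ⟨c, hc2⟩ := hdvda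
      rw [Subgroup.mem_zpowers_iff]
      refine ⟨c, ?_⟩
      rw [← zpow_natCast g e, ← zpow_mul, ← hc2, ha]
    have hcard2 : Nat.card (Subgroup.zpowers (g ^ e)) = d := by
      rw [Nat.card_zpowers, orderOf_pow, horder, Nat.gcd_eq_right hedvd, ← hde,
        Nat.mul_div_cancel _ he0]
    exact Subgroup.eq_of_le_of_card_ge hle (le_of_eq hcard2)
  rw [key H, key K, hcard]

end Helpers2

section Helpers3

variable {G : Type*} [Group G] {p : ℕ} [Fact p.Prime]
set_option linter.unusedSectionVars false

lemma cyclicByP_sup [Finite G] {R : Subgroup G} {u : G} (hR : IsPGroup p R)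
    (hu : u ∈ Subgroup.normalizer (R : Set G)) (hcop : (orderOf u).Coprime p) :
    IsCyclicByP p ↥(R ⊔ Subgroup.zpowers u) ∧
      ∀ h ∈ R ⊔ Subgroup.zpowers u, ∃ n : ℤ, u ^ n * h⁻¹ ∈ R := by
  set H := R ⊔ Subgroup.zpowers u with hH
  have hRle : R ≤ H := le_sup_left
  have huH : u ∈ H := Subgroup.mem_sup_right (Subgroup.mem_zpowers u)
  have hHn : H ≤ Subgroup.normalizer (R : Set G) := sup_le Subgroup.le_normalizer (Subgroup.zpowers_le.mpr hu)
  set S : Subgroup G :=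
    { carrier := {h : G | ∃ n : ℤ, u ^ n * h⁻¹ ∈ R}
      one_mem' := ⟨0, by simpa using one_mem R⟩
      mul_mem' := by
        rintro a b ⟨n₁, h₁⟩ ⟨n₂, h₂⟩
        refine ⟨n₁ + n₂, ?_⟩
        have key : u ^ (n₁ + n₂) * (a * b)⁻¹ =
            (u ^ n₁ * (u ^ n₂ * b⁻¹) * (u ^ n₁)⁻¹) * (u ^ n₁ * a⁻¹) := by group
        rw [key]
        have hmem : u ^ n₁ * (u ^ n₂ * b⁻¹) * (u ^ n₁)⁻¹ ∈ R :=
          (Subgroup.mem_normalizer_iff.mp ((Subgroup.normalizer (R : Set G)).zpow_mem hu n₁) _).mp h₂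
        exact mul_mem hmem h₁
      inv_mem' := by
        rintro a ⟨n, hn⟩
        refine ⟨-n, ?_⟩
        have key : u ^ (-n) * a⁻¹⁻¹ = (u ^ n)⁻¹ * (u ^ n * a⁻¹)⁻¹ * ((u ^ n)⁻¹)⁻¹ := by group
        rw [key]
        exact (Subgroup.mem_normalizer_iff.mp (inv_mem ((Subgroup.normalizer (R : Set G)).zpow_mem hu n)) _).mp
          (inv_mem hn) } with hS
  have hgen : ∀ h ∈ H, ∃ n : ℤ, u ^ n * h⁻¹ ∈ R := by
    have hle : H ≤ S := by
      rw [hH]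
      refine sup_le ?_ ?_
      · intro r hr
        exact ⟨0, by simpa using inv_mem hr⟩
      · rw [Subgroup.zpowers_le]
        exact ⟨1, by simpa using one_mem R⟩
    exact fun h hh => hle hh
  have hnormal : (R.subgroupOf H).Normal := by
    constructor
    intro x hx g
    rw [Subgroup.mem_subgroupOf] at hx ⊢
    have : (g : G) ∈ Subgroup.normalizer (R : Set G) := hHn g.2
    simpa using (Subgroup.mem_normalizer_iff.mp this (x : G)).mp hx
  haveI := hnormal
  refine ⟨⟨R.subgroupOf H, hnormal, ?_, ?_, ?_⟩, hgen⟩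
  · exact hR.of_equiv (Subgroup.subgroupOfEquivOfLe hRle).symm
  · -- index coprime
    set uH : H := ⟨u, huH⟩ with huH'
    set ub : H ⧸ R.subgroupOf H := QuotientGroup.mk uH with hub
    have htop : ∀ y : H ⧸ R.subgroupOf H, y ∈ Subgroup.zpowers ub := by
      intro y
      obtain ⟨h, rfl⟩ := QuotientGroup.mk'_surjective (R.subgroupOf H) y
      obtain ⟨n, hn⟩ := hgen (h : G) h.2
      refine Subgroup.mem_zpowers_iff.mpr ⟨n, ?_⟩
      have hmem : (uH ^ n)⁻¹ * h ∈ R.subgroupOf H := by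
        rw [Subgroup.mem_subgroupOf]
        have hcoe : (((uH ^ n)⁻¹ * h : H) : G) = (u ^ n)⁻¹ * (h : G) := by push_cast; rfl
        rw [hcoe]
        have e1 : (u ^ n)⁻¹ * (h : G) =
            ((h : G)⁻¹ * (u ^ n * (h : G)⁻¹) * ((h : G)⁻¹)⁻¹)⁻¹ := by group
        rw [e1]
        exact inv_mem
          ((Subgroup.mem_normalizer_iff.mp (inv_mem (hHn h.2)) _).mp hn)
      calc ub ^ n = ((uH ^ n : H) : H ⧸ R.subgroupOf H) := by
            rw [hub, QuotientGroup.mk_zpow]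
      _ = ((h : H) : H ⧸ R.subgroupOf H) := QuotientGroup.eq.mpr hmem
      _ = (QuotientGroup.mk' (R.subgroupOf H)) h := rfl
    have hcard : Nat.card (H ⧸ R.subgroupOf H) = orderOf ub := by
      rw [← Nat.card_zpowers, (Subgroup.zpowers ub).eq_top_iff'.mpr htop, Subgroup.card_top]
    have h2 : orderOf uH = orderOf u :=
      (orderOf_injective H.subtype Subtype.val_injective uH).symm
    have hdvd : orderOf ub ∣ orderOf u := by
      have h1 : orderOf ub ∣ orderOf uH := by
        have := orderOf_map_dvd (QuotientGroup.mk' (R.subgroupOf H)) uH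
        simpa [hub] using this
      rwa [h2] at h1
    rw [Subgroup.index_eq_card, hcard]
    exact Nat.Coprime.coprime_dvd_left hdvd hcop
  · refine ⟨⟨u, huH⟩, fun h => ?_⟩
    obtain ⟨n, hn⟩ := hgen (h : G) h.2
    refine ⟨n, ?_⟩
    rw [Subgroup.mem_subgroupOf]
    have hcoe : (((⟨u, huH⟩ : H) ^ n * h⁻¹ : H) : G) = u ^ n * (h : G)⁻¹ := by
      push_cast
      rfl
    rw [hcoe]
    exact hn

end Helpers3

section Helpers4

variable {G : Type*} [Group G] {p : ℕ} [Fact p.Prime]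
set_option linter.unusedSectionVars false

lemma core_inv [Finite G] (hp : Odd p)
    (hGhyp : ∀ H : Subgroup G, IsCyclicByP p H →
      IsCyclic H ∨ ∃ n : ℕ, Nonempty (H ≃* DihedralGroup (p ^ n)))
    {R : Subgroup G} {u : G} (hR : IsPGroup p R) (hu : u ∈ Subgroup.normalizer (R : Set G))
    (hcop : (orderOf u).Coprime p) (hnc : ∃ x ∈ R, u * x ≠ x * u) :
    u ^ 2 = 1 ∧ ∀ x ∈ R, u * x * u⁻¹ = x⁻¹ := by
  obtain ⟨hcbp, -⟩ := cyclicByP_sup hR hu hcop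
  set H := R ⊔ Subgroup.zpowers u with hH
  have hRle : R ≤ H := le_sup_left
  have huH : u ∈ H := Subgroup.mem_sup_right (Subgroup.mem_zpowers u)
  set uH : H := ⟨u, huH⟩ with huH'
  rcases hGhyp H hcbp with hcyc | ⟨n, ⟨e⟩⟩
  · -- cyclic case: contradiction with non-commuting witness
    exfalso
    obtain ⟨x, hx, hne⟩ := hnc
    obtain ⟨gen, hgencyc⟩ := hcyc
    obtain ⟨aexp, ha⟩ := Subgroup.mem_zpowers_iff.mp (hgencyc uH)
    obtain ⟨bexp, hb⟩ := Subgroup.mem_zpowers_iff.mp (hgencyc ⟨x, hRle hx⟩)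
    have hcomm : uH * ⟨x, hRle hx⟩ = ⟨x, hRle hx⟩ * uH := by
      rw [← ha, ← hb, ← zpow_add, ← zpow_add, add_comm]
    exact hne (by simpa using congrArg Subtype.val hcomm)
  · -- dihedral case
    have hxrot : ∀ x, (hx : x ∈ R) → ∃ j, e ⟨x, hRle hx⟩ = DihedralGroup.r j := by
      intro x hx
      obtain ⟨k, hk⟩ := hR ⟨x, hx⟩
      have hx1 : x ^ p ^ k = 1 := by simpa using congrArg Subtype.val hk
      have hxk : (⟨x, hRle hx⟩ : H) ^ p ^ k = 1 := by
        ext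
        simpa using hx1
      have hek : (e ⟨x, hRle hx⟩) ^ p ^ k = 1 := by rw [← map_pow, hxk, map_one]
      rcases hcase : e ⟨x, hRle hx⟩ with j | j
      · exact ⟨j, rfl⟩
      · exfalso
        rw [hcase] at hek
        obtain ⟨t, ht⟩ := hp.pow (n := k)
        have h2 : DihedralGroup.sr j ^ 2 = (1 : DihedralGroup (p ^ n)) := by
          rw [pow_two, DihedralGroup.sr_mul_self]
        have hsr1 : DihedralGroup.sr j = (1 : DihedralGroup (p ^ n)) := by
          calc DihedralGroup.sr j = DihedralGroup.sr j ^ (2 * t + 1) := by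
                rw [pow_add, pow_mul, h2, one_pow, one_mul, pow_one]
          _ = DihedralGroup.sr j ^ (p ^ k) := by rw [← ht]
          _ = 1 := hek
        rw [DihedralGroup.one_def] at hsr1
        exact absurd hsr1 (by intro h; cases h)
    have hsr : ∃ i, e uH = DihedralGroup.sr i := by
      rcases hcase : e uH with i | i
      · exfalso
        obtain ⟨x, hx, hne⟩ := hnc
        obtain ⟨j, hj⟩ := hxrot x hx
        have hcomm : uH * ⟨x, hRle hx⟩ = ⟨x, hRle hx⟩ * uH := by
          apply e.injective
          rw [map_mul, map_mul, hcase, hj, DihedralGroup.r_mul_r, DihedralGroup.r_mul_r,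
            add_comm]
        exact hne (by simpa using congrArg Subtype.val hcomm)
      · exact ⟨i, rfl⟩
    obtain ⟨i, hi⟩ := hsr
    have hsri : (DihedralGroup.sr i : DihedralGroup (p ^ n))⁻¹ = DihedralGroup.sr i :=
      inv_eq_of_mul_eq_one_right (DihedralGroup.sr_mul_self i)
    constructor
    · have hu2 : uH ^ 2 = 1 := by
        apply e.injective
        rw [map_pow, hi, map_one, pow_two, DihedralGroup.sr_mul_self]
      simpa using congrArg Subtype.val hu2
    · intro x hx
      obtain ⟨j, hj⟩ := hxrot x hx
      have hrj : (DihedralGroup.r j : DihedralGroup (p ^ n))⁻¹ = DihedralGroup.r (-j) :=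
        inv_eq_of_mul_eq_one_right
          (by rw [DihedralGroup.r_mul_r, add_neg_cancel, DihedralGroup.one_def])
      have hinvH : uH * ⟨x, hRle hx⟩ * uH⁻¹ = (⟨x, hRle hx⟩ : H)⁻¹ := by
        apply e.injective
        rw [map_mul, map_mul, map_inv, map_inv, hi, hj, hsri, hrj,
          DihedralGroup.sr_mul_r, DihedralGroup.sr_mul_sr]
        exact congrArg DihedralGroup.r (by ring)
      simpa using congrArg Subtype.val hinvH

end Helpers4

set_option maxHeartbeats 1000000 in
theorem stmt6 {G : Type*} [Group G] [Finite G] (p : ℕ) [Fact p.Prime] (hp : Odd p)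
    (hG : ∀ H : Subgroup G, IsCyclicByP p H →
      IsCyclic H ∨ ∃ n : ℕ, Nonempty (H ≃* DihedralGroup (p ^ n)))
    (P : Sylow p G)
    (hne : Subgroup.normalizer ((P : Subgroup G) : Set G) ≠ Subgroup.centralizer ((P : Subgroup G) : Set G))
    (τ : G) (hτ : τ ∈ Subgroup.normalizer ((P : Subgroup G) : Set G))
    (hτc : τ ∉ Subgroup.centralizer ((P : Subgroup G) : Set G))
    (Q : Subgroup G) (hQ : Q ≠ ⊥) (hQP : Q ≤ P) :
    Subgroup.centralizer (Q : Set G) = Subgroup.centralizer ((P : Subgroup G) : Set G) ∧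
    (∀ a ∈ Subgroup.centralizer (Q : Set G), ∀ b ∈ Subgroup.centralizer (Q : Set G),
      a * b = b * a) ∧
    (∀ c ∈ Subgroup.centralizer (Q : Set G), (τ * c) ^ 2 = 1 ∧ τ * c ≠ 1 ∧
      ∀ a ∈ Subgroup.centralizer (Q : Set G), (τ * c) * a * (τ * c)⁻¹ = a⁻¹) ∧
    Subgroup.normalizer (Q : Set G) = Subgroup.normalizer ((P : Subgroup G) : Set G) := by
  classical
  -- a nontrivial element of Q
  obtain ⟨⟨q, hqQ⟩, hq1'⟩ := Subgroup.ne_bot_iff_exists_ne_one.mp hQ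
  have hq1 : q ≠ 1 := by
    intro h
    exact hq1' (Subtype.ext h)
  have hqP : q ∈ (P : Subgroup G) := hQP hqQ
  -- helper: p-power-order elements of square one are trivial
  have hp2 : ∀ r : G, (∃ k, r ^ p ^ k = 1) → r ^ 2 = 1 → r = 1 := by
    rintro r ⟨k, hk⟩ h2
    have hcop2 : Nat.Coprime 2 (p ^ k) := Nat.coprime_two_left.mpr hp.pow
    have h1 : (orderOf r).Coprime (p ^ k) :=
      Nat.Coprime.coprime_dvd_left (orderOf_dvd_of_pow_eq_one h2) hcop2
    exact orderOf_eq_one_iff.mp (h1.eq_one_of_dvd (orderOf_dvd_of_pow_eq_one hk))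
  -- P is cyclic
  have h1 : (P : Subgroup G) ⊔ Subgroup.zpowers (1 : G) = (P : Subgroup G) := by
    rw [Subgroup.zpowers_one_eq_bot, sup_bot_eq]
  obtain ⟨hPcbp, -⟩ := cyclicByP_sup (p := p) P.isPGroup' (one_mem _)
    (by rw [orderOf_one]; exact Nat.coprime_one_left p)
  rw [h1] at hPcbp
  rcases hG _ hPcbp with hPcyc | ⟨n, ⟨e⟩⟩
  swap
  · exfalso
    obtain ⟨m, hm⟩ := P.isPGroup'.exists_card_eq
    have hcard : Nat.card (P : Subgroup G) = 2 * p ^ n := by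
      rw [Nat.card_congr e.toEquiv, DihedralGroup.nat_card]
    have hodd : Odd (p ^ m) := hp.pow
    rw [← hm, hcard] at hodd
    exact (Nat.not_odd_iff_even.mpr (even_two_mul _)) hodd
  -- P is abelian
  have hPcomm : ∀ x ∈ (P : Subgroup G), ∀ y ∈ (P : Subgroup G), x * y = y * x := by
    intro x hx y hy
    obtain ⟨gen, hgen⟩ := hPcyc
    obtain ⟨a, ha⟩ := Subgroup.mem_zpowers_iff.mp (hgen ⟨x, hx⟩)
    obtain ⟨b, hb⟩ := Subgroup.mem_zpowers_iff.mp (hgen ⟨y, hy⟩)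
    have hco : (⟨x, hx⟩ : (P : Subgroup G)) * ⟨y, hy⟩ = ⟨y, hy⟩ * ⟨x, hx⟩ := by
      rw [← ha, ← hb, ← zpow_add, ← zpow_add, add_comm]
    simpa using congrArg Subtype.val hco
  have hPC : (P : Subgroup G) ≤ Subgroup.centralizer ((P : Subgroup G) : Set G) :=
    fun x hx => Subgroup.mem_centralizer_iff.mpr fun y hy => hPcomm y hy x hx
  -- every element of N(P) \ C(P) is an involution inverting P
  have hINV : ∀ σ : G, σ ∈ Subgroup.normalizer ((P : Subgroup G) : Set G) →
      σ ∉ Subgroup.centralizer ((P : Subgroup G) : Set G) →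
      σ ^ 2 = 1 ∧ ∀ x ∈ (P : Subgroup G), σ * x * σ⁻¹ = x⁻¹ := by
    intro σ hσn hσc
    obtain ⟨a, b, z, w, ha, hb, hba, ⟨k, hak⟩, hbcop, -⟩ := primary_dec (p := p) hp σ
    have hab : a * b = b * a := by rw [ha, hb, ← zpow_add, ← zpow_add, add_comm]
    have haP : a ∈ (P : Subgroup G) := by
      have hzs : Subgroup.zpowers a ≤ Subgroup.normalizer ((P : Subgroup G) : Set G) := by
        rw [Subgroup.zpowers_le, ha]
        exact Subgroup.zpow_mem _ hσn z
      exact le_sylow_of_pgroup P (isPGroup_zpowers' hak) hzs (Subgroup.mem_zpowers a)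
    have hbn : b ∈ Subgroup.normalizer ((P : Subgroup G) : Set G) := by
      rw [hb]; exact Subgroup.zpow_mem _ hσn w
    have hbc : b ∉ Subgroup.centralizer ((P : Subgroup G) : Set G) := by
      intro hbC
      exact hσc (by rw [hba]; exact mul_mem hbC (hPC haP))
    obtain ⟨x, hx, hxb⟩ : ∃ x ∈ (P : Subgroup G), b * x ≠ x * b := by
      by_contra hall
      push_neg at hall
      exact hbc (Subgroup.mem_centralizer_iff.mpr fun y hy => (hall y hy).symm)
    obtain ⟨hb2, hbinv⟩ := core_inv hp hG P.isPGroup' hbn hbcop ⟨x, hx, hxb⟩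
    have hba2 : b * a * b⁻¹ = a⁻¹ := hbinv a haP
    have hbab : b * a * b⁻¹ = a := by rw [← hab, mul_inv_cancel_right]
    have ha1 : a = 1 := by
      have haa : a = a⁻¹ := by
        conv_lhs => rw [← hbab]
        exact hba2
      exact hp2 a ⟨k, hak⟩ (by rw [pow_two]; exact mul_eq_one_iff_eq_inv.mpr haa)
    have hσb : σ = b := by rw [hba, ha1, mul_one]
    exact ⟨by rw [hσb]; exact hb2, fun y hy => by rw [hσb]; exact hbinv y hy⟩
  obtain ⟨hτ2, hτinv⟩ := hINV τ hτ hτc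
  have hττ : τ * τ = 1 := by rw [← pow_two]; exact hτ2
  have hτi : τ⁻¹ = τ := inv_eq_of_mul_eq_one_right hττ
  -- q has p-power order
  have hqpow : ∃ k, q ^ p ^ k = 1 := by
    obtain ⟨k, hk⟩ := P.isPGroup' ⟨q, hqP⟩
    exact ⟨k, by simpa using congrArg Subtype.val hk⟩
  obtain ⟨kq, hkq⟩ := hqpow
  have hq2 : q ^ 2 ≠ 1 := fun h => hq1 (hp2 q ⟨kq, hkq⟩ h)
  -- MAIN STEP: τ inverts everything commuting with q
  have hMain : ∀ c : G, c * q = q * c → (τ * c) ^ 2 = 1 ∧ τ * c * τ⁻¹ = c⁻¹ := by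
    intro c hcq
    set s := τ * c with hs
    have hsq : s * q * s⁻¹ = q⁻¹ := by
      have hτq : τ * q * τ⁻¹ = q⁻¹ := hτinv q hqP
      calc s * q * s⁻¹ = τ * (c * q * c⁻¹) * τ⁻¹ := by rw [hs]; group
      _ = τ * q * τ⁻¹ := by rw [show c * q * c⁻¹ = q from by rw [hcq, mul_inv_cancel_right]]
      _ = q⁻¹ := hτq
    have hparity := conj_zpow_parity hsq
    have hse : Even (orderOf s) := by
      rcases Nat.even_or_odd (orderOf s) with h | h
      · exact h
      · exfalso
        have hz : Odd ((orderOf s : ℤ)) := by exact_mod_cast h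
        have h1 : s ^ ((orderOf s : ℤ)) * q * (s ^ ((orderOf s : ℤ)))⁻¹ = q⁻¹ :=
          (hparity _).2 hz
        rw [zpow_natCast, pow_orderOf_eq_one, one_mul, inv_one, mul_one] at h1
        exact hq2 (by rw [pow_two]; exact mul_eq_one_iff_eq_inv.mpr h1)
    obtain ⟨a, b, z, w, ha, hb, hba, ⟨k2, hak⟩, hbcop, hpar⟩ := primary_dec (p := p) hp s
    obtain ⟨hzev, hwodd⟩ := hpar hse
    have haq : a * q * a⁻¹ = q := by rw [ha]; exact (hparity z).1 hzev
    have hbq : b * q * b⁻¹ = q⁻¹ := by rw [hb]; exact (hparity w).2 hwodd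
    have hab : a * b = b * a := by rw [ha, hb, ← zpow_add, ← zpow_add, add_comm]
    have haqc : a * q = q * a := by
      have h0 := haq
      rwa [mul_inv_eq_iff_eq_mul] at h0
    have hbnq : b ∈ Subgroup.normalizer ((Subgroup.zpowers q : Subgroup G) : Set G) := mem_normalizer_zpowers (Or.inr hbq)
    have hbna : b ∈ Subgroup.normalizer ((Subgroup.zpowers a : Subgroup G) : Set G) :=
      mem_normalizer_zpowers (Or.inl (by rw [← hab, mul_inv_cancel_right]))
    have hqna : q ∈ Subgroup.normalizer ((Subgroup.zpowers a : Subgroup G) : Set G) :=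
      mem_normalizer_zpowers (Or.inl (by rw [← haqc, mul_inv_cancel_right]))
    have hTpg : IsPGroup p ((Subgroup.zpowers q ⊔ Subgroup.zpowers a : Subgroup G)) :=
      IsPGroup.to_sup_of_normal_right' (isPGroup_zpowers' hkq) (isPGroup_zpowers' hak)
        (Subgroup.zpowers_le.mpr hqna)
    have hbnT : b ∈ Subgroup.normalizer ((Subgroup.zpowers q ⊔ Subgroup.zpowers a : Subgroup G) : Set G) :=
      mem_normalizer_sup hbnq hbna
    have hqT : q ∈ Subgroup.zpowers q ⊔ Subgroup.zpowers a :=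
      Subgroup.mem_sup_left (Subgroup.mem_zpowers q)
    have haT : a ∈ Subgroup.zpowers q ⊔ Subgroup.zpowers a :=
      Subgroup.mem_sup_right (Subgroup.mem_zpowers a)
    have hbqne : b * q ≠ q * b := by
      intro hcomm
      have hqq : q⁻¹ = q := by rw [← hbq, hcomm, mul_inv_cancel_right]
      exact hq2 (by rw [pow_two]; exact mul_eq_one_iff_eq_inv.mpr hqq.symm)
    obtain ⟨hb2, hbinvT⟩ := core_inv hp hG hTpg hbnT hbcop ⟨q, hqT, hbqne⟩
    have ha1 : a = 1 := by
      have hinva : b * a * b⁻¹ = a⁻¹ := hbinvT a haT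
      have hfixa : b * a * b⁻¹ = a := by rw [← hab, mul_inv_cancel_right]
      have haa : a = a⁻¹ := by
        conv_lhs => rw [← hfixa]
        exact hinva
      exact hp2 a ⟨k2, hak⟩ (by rw [pow_two]; exact mul_eq_one_iff_eq_inv.mpr haa)
    have hsb : s = b := by rw [hba, ha1, mul_one]
    have hs2 : s ^ 2 = 1 := by rw [hsb]; exact hb2
    refine ⟨hs2, ?_⟩
    have hss : (τ * c) * (τ * c) = 1 := by rw [← pow_two]; exact hs2
    have h4 : (τ * c * τ) * c = 1 := by
      rw [show (τ * c * τ) * c = (τ * c) * (τ * c) from by group, hss]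
    calc τ * c * τ⁻¹ = τ * c * τ := by rw [hτi]
    _ = c⁻¹ := eq_inv_of_mul_eq_one_left h4
  -- τ inverts the centralizer of Q
  have hτD : ∀ c ∈ Subgroup.centralizer (Q : Set G),
      τ * c * τ⁻¹ = c⁻¹ ∧ (τ * c) ^ 2 = 1 := by
    intro c hc
    have hcq : c * q = q * c := (Subgroup.mem_centralizer_iff.mp hc q hqQ).symm
    exact ⟨(hMain c hcq).2, (hMain c hcq).1⟩
  -- the centralizer of Q is abelian
  have hDab : ∀ a ∈ Subgroup.centralizer (Q : Set G),
      ∀ b ∈ Subgroup.centralizer (Q : Set G), a * b = b * a := by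
    intro a ha b hb
    have h1 : τ * (a * b) * τ⁻¹ = (a * b)⁻¹ := (hτD _ (mul_mem ha hb)).1
    have h2 : τ * (a * b) * τ⁻¹ = (τ * a * τ⁻¹) * (τ * b * τ⁻¹) := by group
    rw [h2, (hτD a ha).1, (hτD b hb).1] at h1
    have h3 : a⁻¹ * b⁻¹ = b⁻¹ * a⁻¹ := by rw [h1, mul_inv_rev]
    have h5 : b * a = a * b := by simpa [mul_inv_rev] using congrArg Inv.inv h3
    exact h5.symm
  have hPD : (P : Subgroup G) ≤ Subgroup.centralizer (Q : Set G) :=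
    fun x hx => Subgroup.mem_centralizer_iff.mpr fun y hy => hPcomm y (hQP hy) x hx
  have hDC : Subgroup.centralizer (Q : Set G) =
      Subgroup.centralizer ((P : Subgroup G) : Set G) := by
    apply le_antisymm
    · intro d hd
      exact Subgroup.mem_centralizer_iff.mpr fun y hy => hDab y (hPD hy) d hd
    · intro c hc
      exact Subgroup.mem_centralizer_iff.mpr fun y hy =>
        Subgroup.mem_centralizer_iff.mp hc y (hQP hy)
  -- centralizer of P is inside normalizer of P
  have hCN : Subgroup.centralizer ((P : Subgroup G) : Set G) ≤ Subgroup.normalizer ((P : Subgroup G) : Set G) := by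
    intro c hc
    rw [Subgroup.mem_normalizer_iff]
    intro x
    constructor
    · intro hx
      have hxc := Subgroup.mem_centralizer_iff.mp hc x hx
      rw [show c * x * c⁻¹ = x from by rw [← hxc, mul_inv_cancel_right]]
      exact hx
    · intro hx
      have hcy := Subgroup.mem_centralizer_iff.mp hc _ hx
      have h2 : c * x = c * (c * x * c⁻¹) := by rw [← hcy]; group
      have hxy : x = c * x * c⁻¹ := mul_left_cancel h2
      rw [hxy]
      exact hx
  -- normalizer P ≤ normalizer Q
  have hNPQ : Subgroup.normalizer ((P : Subgroup G) : Set G) ≤ Subgroup.normalizer (Q : Set G) := by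
    intro g hg
    have hgiff := Subgroup.mem_normalizer_iff.mp hg
    have hfinj : Function.Injective (MulAut.conj g).toMonoidHom := (MulAut.conj g).injective
    have hQgP : Q.map (MulAut.conj g).toMonoidHom ≤ (P : Subgroup G) := by
      rintro x ⟨y, hy, rfl⟩
      have hmem : g * y * g⁻¹ ∈ (P : Subgroup G) := (hgiff y).mp (hQP hy)
      simpa [MulAut.conj] using hmem
    have hcards : Nat.card (Q.map (MulAut.conj g).toMonoidHom) = Nat.card Q :=
      (Nat.card_congr (Subgroup.equivMapOfInjective Q _ hfinj).toEquiv).symm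
    have hsub : Q.subgroupOf (P : Subgroup G) =
        (Q.map (MulAut.conj g).toMonoidHom).subgroupOf (P : Subgroup G) := by
      apply cyclic_subgroup_card_inj hPcyc
      rw [Nat.card_congr (Subgroup.subgroupOfEquivOfLe hQP).toEquiv,
        Nat.card_congr (Subgroup.subgroupOfEquivOfLe hQgP).toEquiv, hcards]
    have hQQg : Q = Q.map (MulAut.conj g).toMonoidHom := by
      have h2 := Subgroup.subgroupOf_inj.mp hsub
      rwa [inf_eq_left.mpr hQP, inf_eq_left.mpr hQgP] at h2
    rw [Subgroup.mem_normalizer_iff]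
    intro h
    constructor
    · intro hh
      rw [hQQg]
      exact ⟨h, hh, by simp [MulAut.conj]⟩
    · intro hh
      rw [hQQg] at hh
      obtain ⟨y, hy, hyx⟩ := hh
      have hxy : y = h := by
        have hc1 : g * y * g⁻¹ = g * h * g⁻¹ := by simpa [MulAut.conj] using hyx
        have hc2 := congrArg (fun t => g⁻¹ * t * g) hc1
        simpa [mul_assoc] using hc2
      rwa [← hxy]
  -- normalizer Q ≤ normalizer P
  have hNQP : Subgroup.normalizer (Q : Set G) ≤ Subgroup.normalizer ((P : Subgroup G) : Set G) := by
    intro g hg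
    have hfinj : Function.Injective (MulAut.conj g).toMonoidHom := (MulAut.conj g).injective
    have hPgC : (P : Subgroup G).map (MulAut.conj g).toMonoidHom ≤
        Subgroup.centralizer (Q : Set G) := by
      rintro x ⟨y, hy, rfl⟩
      have hmem : g * y * g⁻¹ ∈ Subgroup.centralizer (Q : Set G) := by
        rw [Subgroup.mem_centralizer_iff]
        intro h hh
        have hinv : g⁻¹ * h * g ∈ Q := (Subgroup.mem_normalizer_iff''.mp hg h).mp hh
        have hcomm : y * (g⁻¹ * h * g) = (g⁻¹ * h * g) * y := hPcomm y hy _ (hQP hinv)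
        calc h * (g * y * g⁻¹) = g * ((g⁻¹ * h * g) * y) * g⁻¹ := by group
        _ = g * (y * (g⁻¹ * h * g)) * g⁻¹ := by rw [hcomm]
        _ = (g * y * g⁻¹) * h := by group
      simpa [MulAut.conj] using hmem
    have hPgN : (P : Subgroup G).map (MulAut.conj g).toMonoidHom ≤
        Subgroup.normalizer ((P : Subgroup G) : Set G) := by
      refine hPgC.trans ?_
      rw [hDC]
      exact hCN
    have hPle : (P : Subgroup G).map (MulAut.conj g).toMonoidHom ≤ (P : Subgroup G) :=
      le_sylow_of_pgroup P (P.isPGroup'.map _) hPgN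
    have hPeq : (P : Subgroup G).map (MulAut.conj g).toMonoidHom = (P : Subgroup G) := by
      apply Subgroup.eq_of_le_of_card_ge hPle
      exact le_of_eq (Nat.card_congr (Subgroup.equivMapOfInjective _ _ hfinj).toEquiv)
    rw [Subgroup.mem_normalizer_iff]
    intro h
    constructor
    · intro hh
      rw [← hPeq]
      exact ⟨h, hh, by simp [MulAut.conj]⟩
    · intro hh
      rw [← hPeq] at hh
      obtain ⟨y, hy, hyx⟩ := hh
      have hxy : y = h := by
        have hc1 : g * y * g⁻¹ = g * h * g⁻¹ := by simpa [MulAut.conj] using hyx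
        have hc2 := congrArg (fun t => g⁻¹ * t * g) hc1
        simpa [mul_assoc] using hc2
      rwa [← hxy]
  refine ⟨hDC, hDab, ?_, le_antisymm hNQP hNPQ⟩
  -- involutions
  intro c hc
  refine ⟨(hτD c hc).2, ?_, ?_⟩
  · intro h
    have : τ = c⁻¹ := eq_inv_of_mul_eq_one_left h
    apply hτc
    rw [← hDC]
    rw [this]
    exact inv_mem hc
  · intro a ha
    have hca : c * a * c⁻¹ = a := by rw [hDab c hc a ha, mul_inv_cancel_right]
    calc (τ * c) * a * (τ * c)⁻¹ = τ * (c * a * c⁻¹) * τ⁻¹ := by group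
    _ = τ * a * τ⁻¹ := by rw [hca]
    _ = a⁻¹ := (hτD a ha).1
end

section
/- Let p be an odd prime and G a finite group with cyclic Sylow p-subgroup P. Let Ω₁(P) be the subgroup of P of order p. Suppose there is an involution τ ∈ G that inverts the abelian group C_G(Ω₁(P)) and N_G(Ω₁(P)) is generated by C_G(Ω₁(P)) and τ. Then every cyclic-by-p subgroup of G is either cyclic or dihedral of order 2·p^n for some n ≥ 1. -/
open Subgroup

lemma aux_pow_card_subgroup {α : Type*} [Group α] [Finite α] (L : Subgroup α) {x : α}
    (hx : x ∈ L) : x ^ (Nat.card L) = 1 := by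
  have h1 : (⟨x, hx⟩ : L) ^ (Nat.card L) = 1 := pow_card_eq_one'
  have h2 := congrArg (Subtype.val) h1
  push_cast at h2
  exact h2

lemma aux_subgroup_eq_of_card_eq {α : Type*} [Group α] [Finite α] [IsCyclic α]
    (H K : Subgroup α) (h : Nat.card H = Nat.card K) : H = K := by
  classical
  letI := Fintype.ofFinite α
  have key : ∀ (L : Subgroup α) (x : α), x ∈ L ↔ x ^ (Nat.card L) = 1 := by
    intro L x
    constructor
    · exact aux_pow_card_subgroup L
    · intro hx
      have hd : 0 < Nat.card L := Nat.card_pos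
      have hsub : (L : Set α).toFinset ⊆ Finset.univ.filter (fun a : α => a ^ (Nat.card L) = 1) := by
        intro y hy
        simp only [Set.mem_toFinset, SetLike.mem_coe] at hy
        simp only [Finset.mem_filter, Finset.mem_univ, true_and]
        exact aux_pow_card_subgroup L hy
      have hcardS : (Finset.univ.filter (fun a : α => a ^ (Nat.card L) = 1)).card ≤ Nat.card L :=
        IsCyclic.card_pow_eq_one_le hd
      have hcardL : (L : Set α).toFinset.card = Nat.card L := by
        rw [Set.toFinset_card, ← Nat.card_eq_fintype_card]
        rfl
      have heq := Finset.eq_of_subset_of_card_le hsub (by omega)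
      have hx' : x ∈ (L : Set α).toFinset := by
        rw [heq]
        simp only [Finset.mem_filter, Finset.mem_univ, true_and]
        exact hx
      simpa using hx'
  ext x
  rw [key H, key K, h]

lemma aux_isCyclic_of_le {G : Type*} [Group G] {B R : Subgroup G} (h : B ≤ R)
    (hR : IsCyclic R) : IsCyclic B := by
  have e : B.subgroupOf R ≃* B := Subgroup.subgroupOfEquivOfLe h
  exact isCyclic_of_surjective e e.surjective

lemma aux_card_map_subtype {G : Type*} [Group G] {N : Type*} [Group N] (B : Subgroup G)
    (f : G →* N) (hf : Function.Injective f) : Nat.card (B.map f) = Nat.card B :=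
  Nat.card_congr (B.equivMapOfInjective f hf).toEquiv.symm

lemma aux_eq_of_le_cyclic {G : Type*} [Group G] [Finite G] {R A B : Subgroup G}
    (hR : IsCyclic R) (hA : A ≤ R) (hB : B ≤ R) (h : Nat.card A = Nat.card B) : A = B := by
  have hA' : Nat.card (A.subgroupOf R) = Nat.card A :=
    Nat.card_congr (Subgroup.subgroupOfEquivOfLe hA).toEquiv
  have hB' : Nat.card (B.subgroupOf R) = Nat.card B :=
    Nat.card_congr (Subgroup.subgroupOfEquivOfLe hB).toEquiv
  have := aux_subgroup_eq_of_card_eq (A.subgroupOf R) (B.subgroupOf R) (by rw [hA', hB', h])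
  calc A = (A.subgroupOf R).map R.subtype := by rw [Subgroup.subgroupOf_map_subtype, inf_eq_left.mpr hA]
    _ = (B.subgroupOf R).map R.subtype := by rw [this]
    _ = B := by rw [Subgroup.subgroupOf_map_subtype, inf_eq_left.mpr hB]

lemma aux_quot_gen {K : Type*} [Group K] [Finite K] (P₀ : Subgroup K) [P₀.Normal] (g : K)
    (hg : ∀ h : K, ∃ n : ℤ, g ^ n * h⁻¹ ∈ P₀) :
    orderOf (QuotientGroup.mk' P₀ g) = P₀.index ∧
      ∀ q : K ⧸ P₀, q ∈ zpowers (QuotientGroup.mk' P₀ g) := by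
  set φ := QuotientGroup.mk' P₀ with hφ
  have hgen : ∀ q : K ⧸ P₀, q ∈ zpowers (φ g) := by
    intro q
    induction q using QuotientGroup.induction_on with
    | H h =>
      obtain ⟨n, hn⟩ := hg h
      have h1 : φ (g ^ n * h⁻¹) = 1 := (QuotientGroup.eq_one_iff _).mpr hn
      have h2 : φ g ^ n = φ h := by
        rw [map_mul, map_zpow, map_inv] at h1
        exact (mul_inv_eq_one.mp h1)
      exact ⟨n, h2⟩
  refine ⟨?_, hgen⟩
  rw [orderOf_eq_card_of_forall_mem_zpowers hgen]
  exact (Subgroup.index_eq_card P₀).symm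

lemma aux_abelian_cyclic {K : Type*} [Group K] [Finite K] {p : ℕ} [Fact p.Prime]
    (hcomm : ∀ a b : K, a * b = b * a)
    (P₀ : Subgroup K) (hPp : IsPGroup p P₀) (hPcyc : IsCyclic P₀)
    (hidx : P₀.index.Coprime p) (g : K) (hg : ∀ h : K, ∃ n : ℤ, g ^ n * h⁻¹ ∈ P₀) :
    IsCyclic K := by
  obtain ⟨k, hk⟩ := hPp.exists_card_eq
  haveI : P₀.Normal := ⟨fun n hn a => by
    have : a * n * a⁻¹ = n := by rw [hcomm a n]; group
    rwa [this]⟩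
  set φ := QuotientGroup.mk' P₀ with hφ
  obtain ⟨hordg, hgen⟩ := aux_quot_gen P₀ g hg
  set y := g ^ (p ^ k) with hy
  have hyim : φ y = (φ g) ^ (p ^ k) := map_pow _ _ _
  have hordφy : orderOf (φ y) = P₀.index := by
    rw [hyim, Nat.Coprime.orderOf_pow]
    · exact hordg
    · rw [hordg]; exact hidx.pow_right k
  have h1 : P₀.index ∣ orderOf y := hordφy ▸ orderOf_map_dvd φ y
  have hgm : g ^ P₀.index ∈ P₀ := by
    have : φ (g ^ P₀.index) = 1 := by
      rw [map_pow, ← hordg, pow_orderOf_eq_one]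
    exact (QuotientGroup.eq_one_iff _).mp this
  have h2 : orderOf y ∣ P₀.index := by
    apply orderOf_dvd_of_pow_eq_one
    have : y ^ P₀.index = (g ^ P₀.index) ^ (p ^ k) := by
      rw [hy, ← pow_mul, ← pow_mul, mul_comm]
    rw [this, ← hk]
    exact aux_pow_card_subgroup P₀ hgm
  have hordy : orderOf y = P₀.index := Nat.dvd_antisymm h2 h1
  obtain ⟨x₀, hx₀⟩ := hPcyc.exists_ofOrder_eq_natCard
  have hordx : orderOf (x₀ : K) = Nat.card P₀ := by
    rw [Subgroup.orderOf_coe, hx₀]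
  have hco : (orderOf (x₀ : K)).Coprime (orderOf y) := by
    rw [hordx, hordy, hk]
    exact (hidx.symm.pow_left k)
  have hcom : Commute (x₀ : K) y := hcomm _ _
  apply isCyclic_of_orderOf_eq_card ((x₀ : K) * y)
  rw [hcom.orderOf_mul_eq_mul_orderOf_of_coprime hco, hordx, hordy,
    Subgroup.card_mul_index]

lemma aux_dihedral {K : Type*} [Group K] [Finite K] (N : ℕ) (hN : N ≠ 0) (x σ : K)
    (hord : orderOf x = N) (hσ2 : σ * σ = 1) (hσx : σ * x * σ⁻¹ = x⁻¹)
    (hσ : σ ∉ zpowers x) (hcover : ∀ k : K, k ∈ zpowers x ∨ k * σ ∈ zpowers x) :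
    Nonempty (K ≃* DihedralGroup N) := by
  haveI : NeZero N := ⟨hN⟩
  have hmod : ∀ t : ℕ, x ^ (t % N) = x ^ t := by
    intro t; have := pow_mod_orderOf x t; rwa [hord] at this
  set π : ZMod N → K := fun i => x ^ i.val with hπ
  have π_add : ∀ i j : ZMod N, π (i + j) = π i * π j := by
    intro i j
    show x ^ (i + j).val = x ^ i.val * x ^ j.val
    rw [ZMod.val_add, hmod, pow_add]
  have π_zero : π 0 = 1 := by
    show x ^ (0 : ZMod N).val = 1
    rw [ZMod.val_zero, pow_zero]
  have π_neg : ∀ i : ZMod N, π (-i) = (π i)⁻¹ := by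
    intro i
    have h1 : π i * π (-i) = 1 := by rw [← π_add, add_neg_cancel, π_zero]
    exact (inv_eq_of_mul_eq_one_right h1).symm
  have π_mem : ∀ i, π i ∈ zpowers x := fun i => pow_mem (mem_zpowers x) _
  have hσinv : σ⁻¹ = σ := inv_eq_of_mul_eq_one_right hσ2
  have σπ : ∀ i : ZMod N, σ * π i * σ⁻¹ = π (-i) := by
    intro i
    show σ * x ^ i.val * σ⁻¹ = π (-i)
    rw [π_neg, ← conj_pow, hσx, inv_pow]
  have π_nat : ∀ t : ℕ, x ^ t = π (t : ZMod N) := by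
    intro t
    show x ^ t = x ^ ((t : ZMod N)).val
    rw [ZMod.val_natCast, hmod]
  have h2 : ∀ i : ZMod N, σ⁻¹ * π i * σ = π (-i) := by
    intro i
    have := σπ i
    rwa [hσinv] at this ⊢
  let f : DihedralGroup N → K := fun d => match d with
    | .r i => π i
    | .sr i => σ * π i
  have hmul : ∀ a b : DihedralGroup N, f (a * b) = f a * f b := by
    rintro (i | i) (j | j)
    · show π (i + j) = π i * π j
      exact π_add i j
    · show σ * π (j - i) = π i * (σ * π j)
      calc σ * π (j - i) = σ * π (-i + j) := by rw [neg_add_eq_sub]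
        _ = σ * (π (-i) * π j) := by rw [π_add]
        _ = σ * (σ⁻¹ * π i * σ) * π j := by rw [h2, mul_assoc]
        _ = π i * (σ * π j) := by group
    · show σ * π (i + j) = σ * π i * π j
      rw [π_add, mul_assoc]
    · show π (j - i) = σ * π i * (σ * π j)
      calc π (j - i) = π (-i + j) := by rw [neg_add_eq_sub]
        _ = π (-i) * π j := π_add _ _
        _ = (σ * π i * σ⁻¹) * π j := by rw [σπ]
        _ = σ * π i * (σ * π j) := by rw [hσinv]; group
  let fh : DihedralGroup N →* K := MonoidHom.mk' f hmul
  have hsurj : Function.Surjective fh := by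
    intro k
    rcases hcover k with hk | hk
    · rcases mem_powers_iff_mem_zpowers.mpr hk with ⟨t, ht⟩
      have ht' : x ^ t = k := ht
      exact ⟨.r (t : ZMod N), by simpa [fh, f, ← π_nat t] using ht'⟩
    · rcases mem_powers_iff_mem_zpowers.mpr hk with ⟨t, ht⟩
      have ht' : x ^ t = k * σ := ht
      refine ⟨.sr (-(t : ZMod N)), ?_⟩
      show σ * π (-(t : ZMod N)) = k
      have e1 : σ * π (-(t : ZMod N)) = π (t : ZMod N) * σ := by
        have e2 := σπ (-(t : ZMod N))
        rw [neg_neg] at e2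
        rw [← e2]; group
      rw [e1, ← π_nat t, ht', mul_assoc, hσ2, mul_one]
  have hinj : Function.Injective fh := by
    rintro (i | i) (j | j) hij
    · have : π i = π j := hij
      have hv : x ^ i.val = x ^ j.val := this
      rw [pow_inj_mod, hord, Nat.mod_eq_of_lt (ZMod.val_lt i), Nat.mod_eq_of_lt (ZMod.val_lt j)] at hv
      exact congrArg _ (ZMod.val_injective N hv)
    · exfalso
      have : π i = σ * π j := hij
      have hσ' : σ = π i * (π j)⁻¹ := by rw [this]; group
      exact hσ (hσ' ▸ mul_mem (π_mem i) (inv_mem (π_mem j)))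
    · exfalso
      have : σ * π i = π j := hij
      have hσ' : σ = π j * (π i)⁻¹ := by rw [← this]; group
      exact hσ (hσ' ▸ mul_mem (π_mem j) (inv_mem (π_mem i)))
    · have h0 : σ * π i = σ * π j := hij
      have : π i = π j := by
        have := congrArg (fun z => σ⁻¹ * z) h0
        simpa [mul_assoc] using this
      have hv : x ^ i.val = x ^ j.val := this
      rw [pow_inj_mod, hord, Nat.mod_eq_of_lt (ZMod.val_lt i), Nat.mod_eq_of_lt (ZMod.val_lt j)] at hv
      exact congrArg _ (ZMod.val_injective N hv)
  exact ⟨(MulEquiv.ofBijective fh ⟨hinj, hsurj⟩).symm⟩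

theorem stmt8 {G : Type*} [Group G] [Finite G] (p : ℕ) [Fact p.Prime] (hp : Odd p)
    (P : Sylow p G) (hP : IsCyclic (P : Subgroup G))
    (Q : Subgroup G) (hQP : Q ≤ P) (hQcard : Nat.card Q = p)
    (τ : G) (hτ1 : τ ≠ 1) (hτ2 : τ ^ 2 = 1)
    (habel : ∀ a ∈ Subgroup.centralizer (Q : Set G), ∀ b ∈ Subgroup.centralizer (Q : Set G),
      a * b = b * a)
    (hinv : ∀ a ∈ Subgroup.centralizer (Q : Set G), τ * a * τ⁻¹ = a⁻¹)
    (hN : Subgroup.normalizer (Q : Set G) = Subgroup.centralizer (Q : Set G) ⊔ Subgroup.closure {τ}) :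
    ∀ H : Subgroup G, IsCyclicByP p H →
      IsCyclic H ∨ ∃ n : ℕ, 1 ≤ n ∧ Nonempty (H ≃* DihedralGroup (p ^ n)) := by
  classical
  intro H hH
  obtain ⟨P₀, hP₀n, hP₀p, hP₀idx, g, hg⟩ := hH
  haveI : P₀.Normal := hP₀n
  by_cases hbot : P₀ = ⊥
  · -- trivial p-part: H is cyclic
    left
    refine ⟨⟨g, fun h => ?_⟩⟩
    obtain ⟨n, hn⟩ := hg h
    rw [hbot, Subgroup.mem_bot] at hn
    exact mem_zpowers_iff.mpr ⟨n, mul_inv_eq_one.mp hn⟩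
  -- the p-core, pushed into G
  set P₁ : Subgroup G := P₀.map H.subtype with hP₁def
  have hP₁le : P₁ ≤ H := map_subtype_le P₀
  have hP₁p : IsPGroup p P₁ := hP₀p.map _
  have hP₁bot : P₁ ≠ ⊥ := by
    intro hcon
    rw [hP₁def, Subgroup.map_eq_bot_iff, Subgroup.ker_subtype, le_bot_iff] at hcon
    exact hbot hcon
  obtain ⟨R, hP₁R⟩ := hP₁p.exists_le_sylow
  obtain ⟨c, hc⟩ := MulAction.exists_smul_eq G P R
  set φm : G →* G := (MulAut.conj c).toMonoidHom with hφm
  have hφinj : Function.Injective φm := (MulAut.conj c).injective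
  have hPc : P.1.map φm = R.1 := by rw [← hc]; rfl
  have hRcyc : IsCyclic (R : Subgroup G) := by
    rw [← hc]
    exact isCyclic_of_surjective (P.equivSMul c) (P.equivSMul c).surjective
  have hP₁cyc : IsCyclic P₁ := aux_isCyclic_of_le hP₁R hRcyc
  -- an order-p subgroup of P₁
  obtain ⟨k, hk⟩ := hP₁p.exists_card_eq
  have hpk : p ∣ Nat.card P₁ := by
    rcases Nat.eq_zero_or_pos k with hk0 | hk0
    · exfalso
      apply hP₁bot
      rw [← Subgroup.card_eq_one]
      rw [hk, hk0, pow_zero]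
    · rw [hk]
      exact dvd_pow_self p hk0.ne'
  letI : Fintype P₁ := Fintype.ofFinite P₁
  have hpk' : p ∣ Fintype.card P₁ := by rwa [← Nat.card_eq_fintype_card]
  obtain ⟨x₁, hx₁⟩ := exists_prime_orderOf_dvd_card p hpk'
  set Q₁ : Subgroup G := zpowers ((x₁ : G)) with hQ₁def
  have hQ₁card : Nat.card Q₁ = p := by
    rw [hQ₁def, Nat.card_zpowers, Subgroup.orderOf_coe, hx₁]
  have hQ₁P₁ : Q₁ ≤ P₁ := zpowers_le.mpr x₁.2
  -- Q₁ is the conjugate of Q by c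
  have hQc : Q.map φm = Q₁ := by
    apply aux_eq_of_le_cyclic hRcyc
    · rw [← hPc]
      exact Subgroup.map_mono hQP
    · exact le_trans hQ₁P₁ hP₁R
    · rw [aux_card_map_subtype Q φm hφinj, hQcard, hQ₁card]
  -- H normalizes Q₁
  have hP₁conj : ∀ h ∈ H, ∀ y ∈ P₁, h * y * h⁻¹ ∈ P₁ := by
    intro h hh y hy
    obtain ⟨y₀, hy₀, rfl⟩ := hy
    have := hP₀n.conj_mem y₀ hy₀ ⟨h, hh⟩
    exact ⟨_, this, rfl⟩
  have hHnormQ₁ : H ≤ Subgroup.normalizer (Q₁ : Set G) := by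
    intro h hh
    have hmap : Q₁.map (MulAut.conj h).toMonoidHom = Q₁ := by
      apply aux_eq_of_le_cyclic hP₁cyc _ hQ₁P₁
      · exact aux_card_map_subtype Q₁ _ (MulAut.conj h).injective
      · rintro _ ⟨b, hb, rfl⟩
        exact hP₁conj h hh b (hQ₁P₁ hb)
    rw [Subgroup.mem_normalizer_iff]
    intro b
    constructor
    · intro hb
      rw [← hmap]
      exact ⟨b, hb, rfl⟩
    · intro hb
      rw [← hmap] at hb
      obtain ⟨b', hb', he⟩ := hb
      have : b' = b := by
        have : (MulAut.conj h) b' = (MulAut.conj h) b := he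
        exact (MulAut.conj h).injective this
      rwa [← this]
  -- conjugated data
  set C : Subgroup G := Subgroup.centralizer (Q : Set G) with hC
  set C' : Subgroup G := C.map φm with hC'
  set τ' : G := c * τ * c⁻¹ with hτ'
  have hnorm_eq : Subgroup.normalizer (Q₁ : Set G) = C' ⊔ closure {τ'} := by
    rw [← hQc, ← Subgroup.map_equiv_normalizer_eq Q (MulAut.conj c), hN,
      Subgroup.map_sup, MonoidHom.map_closure, Set.image_singleton]
    rfl
  have hτ'2 : τ' * τ' = 1 := by
    have h2 : τ * τ = 1 := by rw [← pow_two]; exact hτ2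
    rw [hτ']
    calc c * τ * c⁻¹ * (c * τ * c⁻¹) = c * (τ * τ) * c⁻¹ := by group
      _ = 1 := by rw [h2]; group
  have hττ : τ'⁻¹ = τ' := inv_eq_of_mul_eq_one_right hτ'2
  have hinv' : ∀ a ∈ C', τ' * a * τ'⁻¹ = a⁻¹ := by
    rintro _ ⟨a, ha, rfl⟩
    have h1 : c * (τ * a * τ⁻¹) * c⁻¹ = c * a⁻¹ * c⁻¹ := by rw [hinv a ha]
    have h2 : φm a = c * a * c⁻¹ := rfl
    rw [h2]
    calc τ' * (c * a * c⁻¹) * τ'⁻¹ = c * (τ * a * τ⁻¹) * c⁻¹ := by rw [hτ']; group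
      _ = c * a⁻¹ * c⁻¹ := h1
      _ = (c * a * c⁻¹)⁻¹ := by group
  have habel' : ∀ a ∈ C', ∀ b ∈ C', a * b = b * a := by
    rintro _ ⟨a, ha, rfl⟩ _ ⟨b, hb, rfl⟩
    have h1 : φm a = c * a * c⁻¹ := rfl
    have h2 : φm b = c * b * c⁻¹ := rfl
    rw [h1, h2]
    calc (c * a * c⁻¹) * (c * b * c⁻¹) = c * (a * b) * c⁻¹ := by group
      _ = c * (b * a) * c⁻¹ := by rw [habel a ha b hb]
      _ = (c * b * c⁻¹) * (c * a * c⁻¹) := by group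
  -- every element of the normalizer is in C' or its companion is
  have key : ∀ n ∈ C' ⊔ closure {τ'}, n ∈ C' ∨ n * τ' ∈ C' := by
    have hcl : C' ⊔ closure {τ'} = closure ((C' : Set G) ∪ {τ'}) := by
      rw [Subgroup.closure_union, Subgroup.closure_eq]
    intro n hn
    rw [hcl] at hn
    induction hn using Subgroup.closure_induction with
    | mem y hy =>
      rcases hy with hy | hy
      · exact Or.inl hy
      · right
        rw [Set.mem_singleton_iff] at hy
        rw [hy, hτ'2]
        exact one_mem _
    | one => exact Or.inl (one_mem _)
    | mul y z hy hz ihy ihz =>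
      rcases ihy with hyC | hyC <;> rcases ihz with hzC | hzC
      · exact Or.inl (mul_mem hyC hzC)
      · right
        rw [mul_assoc]
        exact mul_mem hyC hzC
      · right
        have e : y * z * τ' = (y * τ') * (τ'⁻¹ * z * τ') := by group
        rw [e]
        apply mul_mem hyC
        have e2 : τ'⁻¹ * z * τ' = τ' * z * τ'⁻¹ := by rw [hττ]
        rw [e2, hinv' z hzC]
        exact inv_mem hzC
      · left
        have e : (y * τ') * (τ' * (z * τ') * τ'⁻¹) = y * (τ' * τ') * z := by group
        rw [hτ'2, mul_one] at e
        rw [← e]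
        apply mul_mem hyC
        rw [hinv' _ hzC]
        exact inv_mem hzC
    | inv y hy ihy =>
      rcases ihy with hyC | hyC
      · exact Or.inl (inv_mem hyC)
      · right
        have e : y⁻¹ * τ' = τ' * (y * τ')⁻¹ * τ' := by group
        have e3 : τ' * (y * τ')⁻¹ * τ' = τ' * (y * τ')⁻¹ * τ'⁻¹ := by rw [hττ]
        rw [e, e3, hinv' _ (inv_mem hyC), inv_inv]
        exact hyC
  have hmem : ∀ h ∈ H, h ∈ C' ∨ h * τ' ∈ C' := by
    intro h hh
    exact key h (by rw [← hnorm_eq]; exact hHnormQ₁ hh)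
  -- elements whose companion is in C' square to 1
  have sq1 : ∀ y : G, y * τ' ∈ C' → y * y = 1 := by
    intro y hy
    have e : (y * τ') * (τ' * (y * τ') * τ'⁻¹) = y * (τ' * τ') * y := by group
    rw [hτ'2, mul_one, hinv' _ hy, mul_inv_cancel] at e
    exact e.symm
  -- P₁ is inside C'
  have hP₁C' : P₁ ≤ C' := by
    intro y hy
    by_cases hyC : y ∈ C'
    · exact hyC
    · have hyτ : y * τ' ∈ C' := (hmem y (hP₁le hy)).resolve_left hyC
      have hy2 : y * y = 1 := sq1 y hyτ
      have hdvd2 : orderOf y ∣ 2 := orderOf_dvd_of_pow_eq_one (by rw [pow_two]; exact hy2)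
      obtain ⟨j, hj⟩ := hP₁p ⟨y, hy⟩
      have hyp : (y : G) ^ (p ^ j) = 1 := by
        have := congrArg (Subtype.val) hj
        push_cast at this
        exact this
      have hdvdp : orderOf y ∣ p ^ j := orderOf_dvd_of_pow_eq_one hyp
      have hcop : Nat.Coprime 2 (p ^ j) := by
        apply Nat.Coprime.pow_right
        rw [Nat.coprime_primes Nat.prime_two (Fact.out)]
        intro h2p
        rw [← h2p] at hp
        exact (Nat.not_odd_iff_even.mpr even_two) hp
      have h1 : orderOf y ∣ Nat.gcd 2 (p ^ j) := Nat.dvd_gcd hdvd2 hdvdp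
      rw [Nat.Coprime.gcd_eq_one hcop] at h1
      have hy1 : y = 1 := orderOf_eq_one_iff.mp (Nat.dvd_one.mp h1)
      rw [hy1]
      exact one_mem _
  by_cases hHC : ∀ h ∈ H, h ∈ C'
  · -- abelian case
    left
    have hcomm : ∀ a b : H, a * b = b * a := fun a b =>
      Subtype.ext (habel' ↑a (hHC _ a.2) ↑b (hHC _ b.2))
    have e : P₀ ≃* P₁ := P₀.equivMapOfInjective H.subtype (subtype_injective H)
    have hP₀cyc : IsCyclic P₀ := isCyclic_of_surjective e.symm e.symm.surjective
    exact aux_abelian_cyclic hcomm P₀ hP₀p hP₀cyc hP₀idx g hg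
  · -- dihedral case
    push_neg at hHC
    obtain ⟨σ, hσH, hσC⟩ := hHC
    have hστ : σ * τ' ∈ C' := (hmem σ hσH).resolve_left hσC
    have hσ2 : σ * σ = 1 := sq1 σ hστ
    have hσinvinv : σ⁻¹ = σ := inv_eq_of_mul_eq_one_right hσ2
    have hσinvC : ∀ a ∈ C', σ * a * σ⁻¹ = a⁻¹ := by
      intro a ha
      have e : σ * a * σ⁻¹ = (σ * τ') * (τ'⁻¹ * a * τ') * (σ * τ')⁻¹ := by group
      have e2 : τ'⁻¹ * a * τ' = τ' * a * τ'⁻¹ := by rw [hττ]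
      rw [e, e2, hinv' a ha]
      have hcomm := habel' _ hστ _ (inv_mem ha)
      rw [hcomm, mul_assoc, mul_inv_cancel, mul_one]
    set σ₀ : H := ⟨σ, hσH⟩ with hσ₀
    -- quotient facts
    obtain ⟨hordg, hgen⟩ := aux_quot_gen P₀ g hg
    set φq := QuotientGroup.mk' P₀ with hφq
    have hQtcomm : ∀ a b : H ⧸ P₀, a * b = b * a := by
      intro a b
      obtain ⟨n, hn⟩ := hgen a
      obtain ⟨m', hm⟩ := hgen b
      rw [← hn, ← hm, ← zpow_add, ← zpow_add, add_comm]
    have hall2 : ∀ q : H ⧸ P₀, q * q = 1 := by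
      intro q
      induction q using QuotientGroup.induction_on with
      | H kk =>
        by_cases hk : (kk : G) ∈ C'
        · have hkσ : ((kk * σ₀ : H) : G) * ((kk * σ₀ : H) : G) = 1 := by
            push_cast
            calc (kk : G) * σ * ((kk : G) * σ) = (kk : G) * (σ * (kk : G) * σ⁻¹) * (σ * σ) := by group
              _ = 1 := by rw [hσinvC _ hk, hσ2, mul_one, mul_inv_cancel]
          have hkσ' : (kk * σ₀) * (kk * σ₀) = 1 := Subtype.ext (by push_cast; exact hkσ)
          have hσ₀2 : σ₀ * σ₀ = 1 := Subtype.ext (by push_cast; exact hσ2)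
          have h1 : φq (kk * σ₀) * φq (kk * σ₀) = 1 := by
            rw [← map_mul, hkσ', map_one]
          have h2 : φq σ₀ * φq σ₀ = 1 := by
            rw [← map_mul, hσ₀2, map_one]
          have : φq kk * φq kk = 1 := by
            have e : φq kk * φq kk =
                (φq kk * φq σ₀) * (φq σ₀ * φq kk) := by
              rw [mul_assoc, ← mul_assoc (φq σ₀), h2, one_mul]
            rw [e, hQtcomm (φq σ₀) (φq kk), ← map_mul, ← map_mul]
            exact h1
          exact this
        · have hkτ : (kk : G) * τ' ∈ C' := (hmem _ (kk.2)).resolve_left hk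
          have : (kk : G) * (kk : G) = 1 := sq1 _ hkτ
          have hk2 : kk * kk = 1 := Subtype.ext (by push_cast; exact this)
          show φq kk * φq kk = 1
          rw [← map_mul, hk2, map_one]
    -- the index is 2
    have hσ₀P₀ : σ₀ ∉ P₀ := by
      intro hmem'
      exact hσC (hP₁C' ⟨σ₀, hmem', rfl⟩)
    have hidx2 : P₀.index = 2 := by
      have h2 : φq g * φq g = 1 := hall2 _
      have hdvd : orderOf (φq g) ∣ 2 := orderOf_dvd_of_pow_eq_one (by rw [pow_two]; exact h2)
      rw [hordg] at hdvd
      have hne1 : P₀.index ≠ 1 := by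
        intro h1
        exact hσ₀P₀ (Subgroup.index_eq_one.mp h1 ▸ Subgroup.mem_top σ₀)
      rcases (Nat.dvd_prime Nat.prime_two).mp hdvd with h | h
      · exact absurd h hne1
      · exact h
    -- A = P₀
    set A : Subgroup H := C'.comap H.subtype with hA
    have hPA : P₀ ≤ A := by
      intro a ha
      show (a : G) ∈ C'
      exact hP₁C' ⟨a, ha, rfl⟩
    have hσ₀A : σ₀ ∉ A := hσC
    have hAeq : A = P₀ := by
      have hAne : A ≠ ⊤ := fun h => hσ₀A (h ▸ Subgroup.mem_top σ₀)
      have hAdvd : A.index ∣ P₀.index := Subgroup.index_dvd_of_le hPA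
      rw [hidx2] at hAdvd
      have hAne1 : A.index ≠ 1 := fun h => hAne (Subgroup.index_eq_one.mp h)
      have hAidx : A.index = 2 := by
        rcases (Nat.dvd_prime Nat.prime_two).mp hAdvd with h | h
        · exact absurd h hAne1
        · exact h
      have hcard : Nat.card A = Nat.card P₀ := by
        have e1 : Nat.card A * A.index = Nat.card H := Subgroup.card_mul_index A
        have e2 : Nat.card P₀ * P₀.index = Nat.card H := Subgroup.card_mul_index P₀
        rw [hAidx] at e1
        rw [hidx2] at e2
        omega
      exact (Subgroup.eq_of_le_of_card_ge hPA (le_of_eq hcard)).symm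
    -- cardinality of P₀
    obtain ⟨n, hn⟩ : ∃ n, Nat.card P₀ = p ^ n := by
      have : Nat.card P₀ = Nat.card P₁ := by
        rw [hP₁def]
        exact (aux_card_map_subtype P₀ H.subtype (subtype_injective H)).symm
      rw [this, hk]
      exact ⟨k, rfl⟩
    have hn1 : 1 ≤ n := by
      by_contra hcon
      push_neg at hcon
      interval_cases n
      · rw [pow_zero] at hn
        exact hbot (Subgroup.card_eq_one.mp hn)
    -- generator of P₀
    have e : P₀ ≃* P₁ := P₀.equivMapOfInjective H.subtype (subtype_injective H)
    have hP₀cyc : IsCyclic P₀ := isCyclic_of_surjective e.symm e.symm.surjective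
    obtain ⟨x₀, hx₀⟩ := hP₀cyc.exists_ofOrder_eq_natCard
    set x : H := (x₀ : H) with hx
    have hordx : orderOf x = p ^ n := by
      rw [hx, Subgroup.orderOf_coe, hx₀, hn]
    have hxP₀ : x ∈ P₀ := x₀.2
    have hzp : zpowers x = P₀ := by
      apply Subgroup.eq_of_le_of_card_ge (zpowers_le.mpr hxP₀)
      rw [Nat.card_zpowers, hordx, hn]
    have hxC' : (x : G) ∈ C' := hP₁C' ⟨x, hxP₀, rfl⟩
    have hσx : σ₀ * x * σ₀⁻¹ = x⁻¹ := Subtype.ext (by push_cast; exact hσinvC _ hxC')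
    have hσ₀2 : σ₀ * σ₀ = 1 := Subtype.ext (by push_cast; exact hσ2)
    have hσ₀zp : σ₀ ∉ zpowers x := by
      rw [hzp]
      exact hσ₀P₀
    have hcover : ∀ kk : H, kk ∈ zpowers x ∨ kk * σ₀ ∈ zpowers x := by
      intro kk
      rw [hzp, ← hAeq]
      by_cases hk : (kk : G) ∈ C'
      · exact Or.inl hk
      · right
        show ((kk * σ₀ : H) : G) ∈ C'
        have hkτ : (kk : G) * τ' ∈ C' := (hmem _ kk.2).resolve_left hk
        have hτσ : τ' * σ ∈ C' := by
          have : τ' * σ = (σ * τ')⁻¹ := by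
            rw [mul_inv_rev, hττ, hσinvinv]
          rw [this]
          exact inv_mem hστ
        have e1 : ((kk : G)) * σ = ((kk : G) * τ') * (τ'⁻¹ * σ) := by group
        push_cast
        rw [e1, hττ]
        exact mul_mem hkτ hτσ
    obtain ⟨equiv⟩ := aux_dihedral (p ^ n) (pow_ne_zero n (Fact.out : p.Prime).ne_zero) x σ₀
      hordx hσ₀2 hσx hσ₀zp hcover
    exact Or.inr ⟨n, hn1, ⟨equiv⟩⟩
end

section
/- Let G be a finite group such that every cyclic-by-2 subgroup of G is cyclic, a dihedral 2-group, or isomorphic to A₄. If a Sylow 2-subgroup P of G is dihedral (not cyclic), then C_G(K) = K for every elementary abelian subgroup K ≤ P of order 4. -/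
theorem stmt12 {G : Type*} [Group G] [Finite G]
    (hG : ∀ H : Subgroup G, IsCyclicByP 2 H →
      IsCyclic H ∨ (∃ n : ℕ, Nonempty (H ≃* DihedralGroup (2 ^ n))) ∨
        Nonempty (H ≃* alternatingGroup (Fin 4)))
    (P : Sylow 2 G)
    (hPd : ∃ n : ℕ, Nonempty ((P : Subgroup G) ≃* DihedralGroup (2 ^ n)))
    (hPnc : ¬ IsCyclic (P : Subgroup G)) :
    ∀ K : Subgroup G, K ≤ P → Nat.card K = 4 → (∀ x ∈ K, x ^ 2 = 1) →
      Subgroup.centralizer (K : Set G) = K := by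
  intro K hKP hK4 hK2
  -- every two elements of K commute
  have hinv : ∀ k ∈ K, k⁻¹ = k := by
    intro k hk
    have h := hK2 k hk
    rw [pow_two] at h
    exact inv_eq_of_mul_eq_one_left h
  have hcomm : ∀ x ∈ K, ∀ y ∈ K, x * y = y * x := by
    intro x hx y hy
    have hxy := hK2 _ (K.mul_mem hx hy)
    rw [pow_two] at hxy
    have h1 : (x * y)⁻¹ = x * y := by
      rw [eq_comm, eq_inv_iff_mul_eq_one]; exact hxy
    calc x * y = (x * y)⁻¹ := h1.symm
      _ = y⁻¹ * x⁻¹ := by rw [mul_inv_rev]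
      _ = y * x := by rw [hinv x hx, hinv y hy]
  -- K is not cyclic
  have hKnc : ¬ IsCyclic ↥K := by
    intro hcyc
    obtain ⟨g, hg⟩ := hcyc.exists_generator
    have hord : orderOf g = 4 := by
      rw [orderOf_eq_card_of_forall_mem_zpowers hg]; exact hK4
    have hg2 : g ^ 2 = 1 := by
      ext
      push_cast
      exact hK2 _ g.2
    have := orderOf_dvd_of_pow_eq_one hg2
    rw [hord] at this
    omega
  apply le_antisymm
  · -- centralizer K ≤ K
    intro c hc
    rw [Subgroup.mem_centralizer_iff] at hc
    have hCk : ∀ k ∈ K, Commute k c := fun k hk => hc k hk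
    set H : Subgroup G := Subgroup.closure ((K : Set G) ∪ {c}) with hH
    have hKH : K ≤ H := fun k hk => Subgroup.subset_closure (Or.inl hk)
    have hcH : c ∈ H := Subgroup.subset_closure (Or.inr rfl)
    -- normal form of elements of H
    have hform : ∀ h ∈ H, ∃ k ∈ K, ∃ m : ℤ, h = k * c ^ m := by
      intro h hh
      induction hh using Subgroup.closure_induction with
      | mem x hx =>
        rcases hx with hx | hx
        · exact ⟨x, hx, 0, by simp⟩
        · exact ⟨1, K.one_mem, 1, by simp [Set.mem_singleton_iff.mp hx]⟩
      | one => exact ⟨1, K.one_mem, 0, by simp⟩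
      | mul x y hx hy ihx ihy =>
        obtain ⟨k₁, hk₁, m₁, rfl⟩ := ihx
        obtain ⟨k₂, hk₂, m₂, rfl⟩ := ihy
        refine ⟨k₁ * k₂, K.mul_mem hk₁ hk₂, m₁ + m₂, ?_⟩
        have hco : c ^ m₁ * k₂ = k₂ * c ^ m₁ := (((hCk k₂ hk₂)).zpow_right m₁).symm.eq
        rw [zpow_add, mul_assoc k₁, ← mul_assoc (c ^ m₁), hco, mul_assoc, ← mul_assoc,
          ← mul_assoc]
      | inv x hx ihx =>
        obtain ⟨k, hk, m, rfl⟩ := ihx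
        refine ⟨k⁻¹, K.inv_mem hk, -m, ?_⟩
        have hco : (c ^ m)⁻¹ * k⁻¹ = k⁻¹ * (c ^ m)⁻¹ :=
          (((hCk k hk).zpow_right m).symm.inv_inv).eq
        rw [mul_inv_rev, hco, zpow_neg]
    -- H is commutative
    have habel : ∀ a b : ↥H, a * b = b * a := by
      rintro ⟨a, ha⟩ ⟨b, hb⟩
      obtain ⟨k₁, hk₁, m₁, rfl⟩ := hform a ha
      obtain ⟨k₂, hk₂, m₂, rfl⟩ := hform b hb
      have A : Commute k₁ k₂ := hcomm k₁ hk₁ k₂ hk₂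
      have B : Commute k₁ (c ^ m₂) := (hCk k₁ hk₁).zpow_right m₂
      have C : Commute (c ^ m₁) k₂ := ((hCk k₂ hk₂).zpow_right m₁).symm
      have D : Commute (c ^ m₁) (c ^ m₂) := (Commute.refl c).zpow_zpow m₁ m₂
      have : Commute (k₁ * c ^ m₁) (k₂ * c ^ m₂) :=
        (A.mul_right B).mul_left (C.mul_right D)
      exact Subtype.ext this.eq
    -- K inside H is a 2-group
    have hKpgroup : IsPGroup 2 ↥K := IsPGroup.of_card (n := 2) (by rw [hK4]; norm_num)
    have hKsub : IsPGroup 2 ↥(K.subgroupOf H) :=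
      hKpgroup.of_equiv (Subgroup.subgroupOfEquivOfLe hKH).symm
    obtain ⟨T, hKT⟩ := hKsub.exists_le_sylow
    -- H is cyclic-by-2
    have hHc2 : IsCyclicByP 2 ↥H := by
      refine ⟨T, ⟨fun n hn g => ?_⟩, T.2, ?_, ⟨c, hcH⟩, ?_⟩
      · have : g * n * g⁻¹ = n := by
          rw [habel g n, mul_assoc, mul_inv_cancel, mul_one]
        rw [this]; exact hn
      · have : ¬ (2 ∣ (T : Subgroup ↥H).index) := T.not_dvd_index
        exact (Nat.prime_two.coprime_iff_not_dvd.mpr this).symm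
      · rintro ⟨h, hh⟩
        obtain ⟨k, hk, m, hkm⟩ := hform h hh
        refine ⟨m, hKT ?_⟩
        rw [Subgroup.mem_subgroupOf]
        have : ((⟨c, hcH⟩ : ↥H) ^ m * (⟨h, hh⟩ : ↥H)⁻¹ : ↥H) = (⟨c ^ m * h⁻¹, by
          exact H.mul_mem (H.zpow_mem hcH m) (H.inv_mem hh)⟩ : ↥H) := by
          ext; push_cast; rfl
        rw [this]
        show c ^ m * h⁻¹ ∈ K
        rw [hkm, mul_inv_rev, ← mul_assoc, mul_inv_cancel, one_mul]
        exact K.inv_mem hk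
    rcases hG H hHc2 with hcyc | ⟨n, ⟨e⟩⟩ | hA4
    · exact absurd (Subgroup.isCyclic_of_le hKH) hKnc
    · -- dihedral case
      have hDcomm : ∀ x y : DihedralGroup (2 ^ n), x * y = y * x := by
        intro x y
        have := congrArg e (habel (e.symm x) (e.symm y))
        simpa using this
      rcases le_or_gt n 1 with hn | hn
      · -- then |H| ≤ 4 = |K|, so H = K and c ∈ K
        have hcard : Nat.card ↥H = 2 * 2 ^ n := by
          rw [Nat.card_congr e.toEquiv, DihedralGroup.nat_card]
        have hle : Nat.card ↥H ≤ 4 := by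
          rw [hcard]; interval_cases n <;> norm_num
        have : K = H := Subgroup.eq_of_le_of_card_ge hKH (by rw [hK4]; exact hle)
        rw [this]; exact hcH
      · -- 2^n ≥ 4: dihedral group is not commutative
        exfalso
        have h1 := hDcomm (DihedralGroup.r 1) (DihedralGroup.sr 0)
        rw [DihedralGroup.r_mul_sr, DihedralGroup.sr_mul_r] at h1
        have h2 : (0 - 1 : ZMod (2 ^ n)) = 0 + 1 := by injection h1
        have h3 : (2 : ZMod (2 ^ n)) = 0 := by linear_combination -h2
        have h4 : ((2 : ℕ) : ZMod (2 ^ n)) = 0 := by exact_mod_cast h3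
        rw [ZMod.natCast_eq_zero_iff] at h4
        have := Nat.le_of_dvd (by norm_num) h4
        have : 4 ≤ 2 ^ n := by
          calc 4 = 2 ^ 2 := by norm_num
            _ ≤ 2 ^ n := Nat.pow_le_pow_right (by norm_num) hn
        omega
    · -- A₄ case: A₄ is not commutative
      exfalso
      obtain ⟨e⟩ := hA4
      have hAcomm : ∀ x y : alternatingGroup (Fin 4), x * y = y * x := by
        intro x y
        have := congrArg e (habel (e.symm x) (e.symm y))
        simpa using this
      have hσ : (Equiv.swap (0 : Fin 4) 1 * Equiv.swap 2 3) ∈ alternatingGroup (Fin 4) := by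
        rw [Equiv.Perm.mem_alternatingGroup]; decide
      have hτ : (Equiv.swap (0 : Fin 4) 1 * Equiv.swap 1 2) ∈ alternatingGroup (Fin 4) := by
        rw [Equiv.Perm.mem_alternatingGroup]; decide
      have h := hAcomm ⟨_, hσ⟩ ⟨_, hτ⟩
      have h' : (Equiv.swap (0 : Fin 4) 1 * Equiv.swap 2 3) *
          (Equiv.swap (0 : Fin 4) 1 * Equiv.swap 1 2) =
          (Equiv.swap (0 : Fin 4) 1 * Equiv.swap 1 2) *
          (Equiv.swap (0 : Fin 4) 1 * Equiv.swap 2 3) := by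
        exact congrArg Subtype.val h
      revert h'
      decide
  · -- K ≤ centralizer K
    intro k hk
    rw [Subgroup.mem_centralizer_iff]
    intro m hm
    exact hcomm m hm k hk
end
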